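/- arXiv:1411.5739 — 11 statements merged into one kernel-verified Lean document; each statement's English description precedes it below -/
import Mathlib

section
/- (Offline disjoint set cover guarantee) Let U be a finite universe with |U| = n >= 2 and let S be a finite indexed family of subsets of U with F_min(S) = F. Set l = floor(F / ln(n * ln n)). If l >= 1, then T_opt(S) >= l - l / ln n; that is, there exist at least l * (1 - 1/ln n) pairwise disjoint set covers of U from S. -/
/-- Frequency of element `i` in the finite indexed family `S`. -/
noncomputable def freqFam {U ι : Type*} (S : ι → Finset U) (i : U) : ℕ :=
  Nat.card {j : ι // i ∈ S j}

/-- The minimum frequency of an element of the universe. -/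
noncomputable def FminFam {U ι : Type*} (S : ι → Finset U) : ℕ :=
  sInf (Set.range fun i : U => freqFam S i)

/-- The maximum number of pairwise disjoint set covers obtainable from the family `S`. -/
noncomputable def ToptFam {U ι : Type*} (S : ι → Finset U) : ℕ :=
  sSup {k | ∃ C : Fin k → Finset ι,
    (∀ a b, a ≠ b → Disjoint (C a) (C b)) ∧
    ∀ a, ∀ u : U, ∃ j ∈ C a, u ∈ S j}

lemma topt_bddAbove {U ι : Type*} [Fintype ι] [Nonempty U] (S : ι → Finset U) :
    BddAbove {k | ∃ C : Fin k → Finset ι,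
      (∀ a b, a ≠ b → Disjoint (C a) (C b)) ∧
      ∀ a, ∀ u : U, ∃ j ∈ C a, u ∈ S j} := by
  refine ⟨Fintype.card ι, ?_⟩
  rintro k ⟨C, hdisj, hcov⟩
  obtain ⟨u⟩ := ‹Nonempty U›
  have hne : ∀ a : Fin k, ∃ j, j ∈ C a := fun a => by
    obtain ⟨j, hj, _⟩ := hcov a u; exact ⟨j, hj⟩
  choose f hf using hne
  have hinj : Function.Injective f := by
    intro a b hab
    by_contra h
    exact (Finset.disjoint_left.1 (hdisj a b h)) (hf a) (hab ▸ hf b)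
  simpa using Fintype.card_le_of_injective f hinj

lemma topt_ge {U ι : Type*} [Fintype ι] [Nonempty U] (S : ι → Finset U) (k : ℕ)
    (C : Fin k → Finset ι)
    (hdisj : ∀ a b, a ≠ b → Disjoint (C a) (C b))
    (hcov : ∀ a, ∀ u : U, ∃ j ∈ C a, u ∈ S j) :
    k ≤ ToptFam S :=
  le_csSup (topt_bddAbove S) ⟨C, hdisj, hcov⟩

/-- (Offline disjoint set cover guarantee) Let `U = Fin n` with `n ≥ 2` and let `S`
be a finite indexed family of subsets of `U` with `F_min(S) = F`.  Set
`l = ⌊F / ln (n * ln n)⌋`.  If `l ≥ 1` then `T_opt(S) ≥ l - l / ln n`. -/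
theorem stmt4 {ι : Type*} [Fintype ι] (n : ℕ) (hn : 2 ≤ n)
    (S : ι → Finset (Fin n)) (F l : ℕ)
    (hF : FminFam S = F)
    (hl : l = ⌊(F : ℝ) / Real.log ((n : ℝ) * Real.log n)⌋₊)
    (hl1 : 1 ≤ l) :
    (l : ℝ) - (l : ℝ) / Real.log n ≤ (ToptFam S : ℝ) := by
  classical
  have hnU : Nonempty (Fin n) := ⟨⟨0, by omega⟩⟩
  have hn1 : (1:ℝ) < (n:ℝ) := by exact_mod_cast hn.trans_lt' one_lt_two
  have hlogn : 0 < Real.log n := Real.log_pos hn1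
  have hl0 : (0:ℝ) < (l:ℝ) := by exact_mod_cast hl1
  -- X = n * log n > 1
  have hX1 : (1:ℝ) < (n:ℝ) * Real.log n := by
    have h2 : (2:ℝ) ≤ (n:ℝ) := by exact_mod_cast hn
    have hlog2 : Real.log 2 ≤ Real.log n := Real.log_le_log (by norm_num) h2
    have h4 : (1:ℝ) < Real.log 4 := by
      rw [Real.lt_log_iff_exp_lt (by norm_num)]
      have := Real.exp_one_lt_d9
      linarith
    have h4' : Real.log 4 = 2 * Real.log 2 := by
      rw [show (4:ℝ) = 2^2 by norm_num, Real.log_pow]; push_cast; ring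
    have hlog2pos : 0 < Real.log 2 := Real.log_pos (by norm_num)
    nlinarith
  have hXpos : (0:ℝ) < (n:ℝ) * Real.log n := by linarith
  have hlogX : 0 < Real.log ((n:ℝ) * Real.log n) := Real.log_pos hX1
  -- l * log X ≤ F
  have hlF : (l:ℝ) * Real.log ((n:ℝ) * Real.log n) ≤ (F:ℝ) := by
    have := Nat.floor_le (R := ℝ)
      (div_nonneg (Nat.cast_nonneg F) hlogX.le)
    rw [← hl] at this
    calc (l:ℝ) * Real.log ((n:ℝ) * Real.log n)
        ≤ ((F:ℝ) / Real.log ((n:ℝ) * Real.log n)) * Real.log ((n:ℝ) * Real.log n) := by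
          exact mul_le_mul_of_nonneg_right this hlogX.le
      _ = (F:ℝ) := by field_simp
  -- key exponential bound
  have hexp : (1 - 1/(l:ℝ))^F ≤ 1 / ((n:ℝ) * Real.log n) := by
    have h1l : 0 ≤ 1 - 1/(l:ℝ) := by
      have : 1/(l:ℝ) ≤ 1 := by
        rw [div_le_one hl0]; exact_mod_cast hl1
      linarith
    have step1 : (1 - 1/(l:ℝ))^F ≤ Real.exp (-(1/(l:ℝ)))^F := by
      apply pow_le_pow_left₀ h1l
      have := Real.add_one_le_exp (-(1/(l:ℝ)))
      linarith
    have step2 : Real.exp (-(1/(l:ℝ)))^F = Real.exp (-((F:ℝ)/(l:ℝ))) := by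
      rw [← Real.exp_nat_mul]; ring_nf
    have step3 : Real.exp (-((F:ℝ)/(l:ℝ))) ≤ Real.exp (-(Real.log ((n:ℝ) * Real.log n))) := by
      apply Real.exp_le_exp.2
      rw [neg_le_neg_iff]
      rw [le_div_iff₀ hl0]
      linarith [hlF]
    have step4 : Real.exp (-(Real.log ((n:ℝ) * Real.log n))) = 1 / ((n:ℝ) * Real.log n) := by
      rw [Real.exp_neg, Real.exp_log hXpos, one_div]
    calc (1 - 1/(l:ℝ))^F ≤ Real.exp (-(1/(l:ℝ)))^F := step1
      _ = Real.exp (-((F:ℝ)/(l:ℝ))) := step2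
      _ ≤ 1 / ((n:ℝ) * Real.log n) := by rw [← step4]; exact step3
  -- combinatorial setup
  set m := Fintype.card ι with hm
  set d : Fin n → ℕ := fun u => (Finset.univ.filter (fun j => u ∈ S j)).card with hd
  have hFd : ∀ u, F ≤ d u := by
    intro u
    have : freqFam S u = d u := by
      rw [freqFam, Nat.card_eq_fintype_card, Fintype.card_subtype]
    rw [← this, ← hF]
    exact Nat.sInf_le ⟨u, rfl⟩
  have hdm : ∀ u, d u ≤ m := fun u => by
    simpa [hm] using Finset.card_filter_le Finset.univ (fun j => u ∈ S j)
  -- count of bad colorings for a fixed color and element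
  have hM : ∀ (c : Fin l) (u : Fin n),
      (Finset.univ.filter (fun g : ι → Fin l => ∀ j, u ∈ S j → g j ≠ c)).card
        = (l-1)^(d u) * l^(m - d u) := by
    intro c u
    have heq : Finset.univ.filter (fun g : ι → Fin l => ∀ j, u ∈ S j → g j ≠ c)
        = Fintype.piFinset (fun j => if u ∈ S j then {c}ᶜ else Finset.univ) := by
      ext g
      simp only [Finset.mem_filter, Finset.mem_univ, true_and, Fintype.mem_piFinset]
      apply forall_congr'
      intro j
      by_cases h : u ∈ S j <;> simp [h]
    rw [heq, Fintype.card_piFinset]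
    rw [show (fun j => (if u ∈ S j then ({c}ᶜ : Finset (Fin l)) else Finset.univ).card)
        = fun j => (if u ∈ S j then l - 1 else l) from funext fun j => by
          by_cases h : u ∈ S j <;> simp [h, Finset.card_compl]]
    rw [Finset.prod_ite (fun _ => l-1) (fun _ => l), Finset.prod_const, Finset.prod_const]
    congr 1
    rw [Finset.filter_not, Finset.card_sdiff_of_subset (Finset.filter_subset _ _)]
    simp [hd, hm]
  -- Bad sets
  set Bad : (ι → Fin l) → Finset (Fin l) :=
    fun g => Finset.univ.filter (fun c => ¬ ∀ u : Fin n, ∃ j, g j = c ∧ u ∈ S j) with hBad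
  -- step A
  have stepA : ∀ g : ι → Fin l, (Bad g).card ≤
      ∑ c : Fin l, (Finset.univ.filter (fun u : Fin n => ∀ j, u ∈ S j → g j ≠ c)).card := by
    intro g
    calc (Bad g).card = ∑ c ∈ Bad g, 1 := by simp
      _ ≤ ∑ c ∈ Bad g,
          (Finset.univ.filter (fun u : Fin n => ∀ j, u ∈ S j → g j ≠ c)).card := by
          apply Finset.sum_le_sum
          intro c hc
          rw [hBad, Finset.mem_filter] at hc
          push_neg at hc
          obtain ⟨-, u, hu⟩ := hc
          apply Finset.card_pos.2
          refine ⟨u, Finset.mem_filter.2 ⟨Finset.mem_univ u, fun j hj h => ?_⟩⟩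
          exact hu j h hj
      _ ≤ ∑ c : Fin l,
          (Finset.univ.filter (fun u : Fin n => ∀ j, u ∈ S j → g j ≠ c)).card :=
          Finset.sum_le_sum_of_subset (Finset.filter_subset _ _)
  -- total counting
  have total : ∑ g : ι → Fin l, (Bad g).card ≤
      ∑ c : Fin l, ∑ u : Fin n, (l-1)^(d u) * l^(m - d u) := by
    calc ∑ g : ι → Fin l, (Bad g).card
        ≤ ∑ g : ι → Fin l, ∑ c : Fin l,
            (Finset.univ.filter (fun u : Fin n => ∀ j, u ∈ S j → g j ≠ c)).card :=
          Finset.sum_le_sum fun g _ => stepA g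
      _ = ∑ c : Fin l, ∑ u : Fin n,
            (Finset.univ.filter (fun g : ι → Fin l => ∀ j, u ∈ S j → g j ≠ c)).card := by
          simp only [Finset.card_filter]
          rw [Finset.sum_comm]
          congr 1; ext c
          rw [Finset.sum_comm]
      _ = ∑ c : Fin l, ∑ u : Fin n, (l-1)^(d u) * l^(m - d u) := by
          congr 1; ext c; congr 1; ext u; exact hM c u
  -- real bound on each term
  have hterm : ∀ u : Fin n, (((l-1)^(d u) * l^(m - d u) : ℕ) : ℝ)
      ≤ (l:ℝ)^m * (1 / ((n:ℝ) * Real.log n)) := by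
    intro u
    have hcast : (((l-1 : ℕ)):ℝ) = (l:ℝ) - 1 := by
      rw [Nat.cast_sub hl1]; norm_num
    have hlne : (l:ℝ) ≠ 0 := ne_of_gt hl0
    have e1 : ((l:ℝ))^(m - d u) = (l:ℝ)^m * ((l:ℝ)^(d u))⁻¹ := pow_sub₀ _ hlne (hdm u)
    have h1l : 0 ≤ 1 - 1/(l:ℝ) := by
      have : 1/(l:ℝ) ≤ 1 := by rw [div_le_one hl0]; exact_mod_cast hl1
      linarith
    have h1l' : 1 - 1/(l:ℝ) ≤ 1 := by
      have : 0 ≤ 1/(l:ℝ) := by positivity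
      linarith
    have key : (((l-1)^(d u) * l^(m - d u) : ℕ) : ℝ)
        = (l:ℝ)^m * (1 - 1/(l:ℝ))^(d u) := by
      push_cast [hcast]
      rw [e1]
      rw [show (1 - 1/(l:ℝ)) = ((l:ℝ)-1) / l by field_simp]
      rw [div_pow]
      field_simp
    rw [key]
    apply mul_le_mul_of_nonneg_left _ (by positivity)
    calc (1 - 1/(l:ℝ))^(d u) ≤ (1 - 1/(l:ℝ))^F :=
          pow_le_pow_of_le_one h1l h1l' (hFd u)
      _ ≤ 1 / ((n:ℝ) * Real.log n) := hexp
  -- real total bound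
  have rtotal : ((∑ g : ι → Fin l, (Bad g).card : ℕ) : ℝ)
      ≤ (l:ℝ)^m * ((l:ℝ) / Real.log n) := by
    have h1 : ((∑ g : ι → Fin l, (Bad g).card : ℕ) : ℝ)
        ≤ ((∑ c : Fin l, ∑ u : Fin n, (l-1)^(d u) * l^(m - d u) : ℕ) : ℝ) := by
      exact_mod_cast total
    have h2 : ((∑ c : Fin l, ∑ u : Fin n, (l-1)^(d u) * l^(m - d u) : ℕ) : ℝ)
        ≤ (l:ℝ) * ((n:ℝ) * ((l:ℝ)^m * (1 / ((n:ℝ) * Real.log n)))) := by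
      push_cast [Nat.cast_sub hl1]
      calc ∑ c : Fin l, ∑ u : Fin n, (((l:ℝ)-1)^(d u) * (l:ℝ)^(m - d u))
          ≤ ∑ c : Fin l, ∑ u : Fin n, (l:ℝ)^m * (1 / ((n:ℝ) * Real.log n)) := by
            apply Finset.sum_le_sum; intro c _
            apply Finset.sum_le_sum; intro u _
            have := hterm u
            push_cast [Nat.cast_sub hl1] at this
            convert this using 2 <;> norm_num
        _ = (l:ℝ) * ((n:ℝ) * ((l:ℝ)^m * (1 / ((n:ℝ) * Real.log n)))) := by
            simp [Finset.sum_const, Finset.card_univ, mul_assoc]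
    have h3 : (l:ℝ) * ((n:ℝ) * ((l:ℝ)^m * (1 / ((n:ℝ) * Real.log n))))
        = (l:ℝ)^m * ((l:ℝ) / Real.log n) := by
      have hn0 : (n:ℝ) ≠ 0 := by positivity
      field_simp
    linarith
  -- pigeonhole
  have hnel : Nonempty (Fin l) := ⟨⟨0, hl1⟩⟩
  have hcardfun : (Finset.univ : Finset (ι → Fin l)).card = l^m := by
    rw [Finset.card_univ, Fintype.card_fun, Fintype.card_fin]
  obtain ⟨g, hg⟩ : ∃ g : ι → Fin l, ((Bad g).card : ℝ) ≤ (l:ℝ) / Real.log n := by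
    by_contra h
    push_neg at h
    have hne : (Finset.univ : Finset (ι → Fin l)).Nonempty := Finset.univ_nonempty
    have : ∑ g : ι → Fin l, ((l:ℝ) / Real.log n) < ∑ g : ι → Fin l, ((Bad g).card : ℝ) :=
      Finset.sum_lt_sum_of_nonempty hne fun g _ => h g
    rw [Finset.sum_const, hcardfun] at this
    have hc : (∑ g : ι → Fin l, ((Bad g).card : ℝ))
        = ((∑ g : ι → Fin l, (Bad g).card : ℕ) : ℝ) := by push_cast; rfl
    rw [hc] at this
    have : ((l:ℝ)^m) * ((l:ℝ) / Real.log n) < (l:ℝ)^m * ((l:ℝ) / Real.log n) := by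
      calc ((l:ℝ)^m) * ((l:ℝ) / Real.log n)
          = (l^m : ℕ) • ((l:ℝ) / Real.log n) := by
            rw [nsmul_eq_mul]; push_cast; ring
        _ < ((∑ g : ι → Fin l, (Bad g).card : ℕ) : ℝ) := this
        _ ≤ (l:ℝ)^m * ((l:ℝ) / Real.log n) := rtotal
    exact lt_irrefl _ this
  -- good colors
  set Good : Finset (Fin l) :=
    Finset.univ.filter (fun c => ∀ u : Fin n, ∃ j, g j = c ∧ u ∈ S j) with hGood
  have hGB : Good.card + (Bad g).card = l := by
    rw [hGood, hBad]
    rw [Finset.card_filter_add_card_filter_not]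
    simp
  -- construct the covers
  have hT : Good.card ≤ ToptFam S := by
    set e := Good.orderIsoOfFin rfl with he
    apply topt_ge S Good.card (fun a => Finset.univ.filter (fun j => g j = (e a : Fin l)))
    · intro a b hab
      rw [Finset.disjoint_left]
      intro j hj hj'
      rw [Finset.mem_filter] at hj hj'
      have : (e a : Fin l) = (e b : Fin l) := by rw [← hj.2, hj'.2]
      exact hab (e.injective (Subtype.ext this))
    · intro a u
      have hmem : (e a : Fin l) ∈ Good := (e a).2
      obtain ⟨j, hj1, hj2⟩ := (Finset.mem_filter.1 hmem).2 u
      exact ⟨j, Finset.mem_filter.2 ⟨Finset.mem_univ j, hj1⟩, hj2⟩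
  -- conclude
  have hG : ((Good.card : ℕ) : ℝ) = (l:ℝ) - ((Bad g).card : ℝ) := by
    have h : ((Good.card : ℕ) : ℝ) + (((Bad g).card : ℕ) : ℝ) = (l:ℝ) := by
      exact_mod_cast hGB
    linarith
  have hTr : ((Good.card : ℕ) : ℝ) ≤ (ToptFam S : ℝ) := by exact_mod_cast hT
  linarith [hg, hG, hTr]
end

section
/- (PolyOn guarantee) For every n >= 2 there exists a function A : ℕ -> List (Finset (Fin n)) -> ℕ (a deterministic online algorithm that is given F_min in advance) such that for every finite sequence S of subsets of Fin n with F_min(S) = F, setting l = floor(F / ln(n * ln n)), if l >= 1 then T(A(F), S) >= l - l/ln n; i.e., the online allocation produces at least l*(1 - 1/ln n) bins whose union equals Fin n. -/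
/-- Frequency of element `i` in the sequence of subsets `S`. -/
def freqL {U : Type*} [DecidableEq U] (S : List (Finset U)) (i : U) : ℕ :=
  S.countP fun s => decide (i ∈ s)

/-- The minimum frequency `F_min(S)` of an element of the universe. -/
noncomputable def FminL {U : Type*} [Fintype U] [DecidableEq U]
    (S : List (Finset U)) : ℕ :=
  sInf (Set.range fun i : U => freqL S i)

/-- The union of the subsets assigned to bin `b` by the online algorithm `A` on the
arrival sequence `S`: the `j`-th subset is irrevocably assigned to bin
`A [S_1, …, S_j]` (the value of `A` on the prefix ending at `S_j`). -/
def binUnion {U : Type*} [DecidableEq U] (A : List (Finset U) → ℕ)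
    (S : List (Finset U)) (b : ℕ) : Finset U :=
  (Finset.range S.length).sup fun j =>
    if A (S.take (j + 1)) = b then S.getD j ∅ else ∅

/-- `T(A, S)`: the number of bins whose assigned subsets have union the whole
universe, for the online algorithm `A` on the arrival sequence `S`. -/
def TonlineU {U : Type*} [Fintype U] [DecidableEq U] (A : List (Finset U) → ℕ)
    (S : List (Finset U)) : ℕ :=
  (((Finset.range S.length).image fun j => A (S.take (j + 1))).filter
    fun b => binUnion A S b = Finset.univ).card


namespace Scratch
open Finset

variable {n : ℕ}

structure St (n : ℕ) where
  cov : ℕ → Finset (Fin n)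
  cnt : Fin n → ℕ

noncomputable def phi (l F : ℕ) (cnt : Fin n → ℕ) (i : Fin n) : ℝ :=
  (1 - 1 / (l : ℝ)) ^ (F - cnt i)

noncomputable def Wt (l F : ℕ) (σ : St n) (T : Finset (Fin n)) (b : ℕ) : ℝ :=
  ∑ i ∈ T \ σ.cov b, phi l F σ.cnt i

noncomputable def pick (l F : ℕ) (σ : St n) (T : Finset (Fin n)) : ℕ :=
  if h : (Finset.range l).Nonempty then
    (Finset.exists_max_image (Finset.range l) (Wt l F σ T) h).choose
  else 0

lemma pick_mem {l F : ℕ} (hl : 0 < l) (σ : St n) (T : Finset (Fin n)) :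
    pick l F σ T ∈ Finset.range l := by
  have h : (Finset.range l).Nonempty := ⟨0, by simpa using hl⟩
  rw [pick, dif_pos h]
  exact (Finset.exists_max_image (Finset.range l) (Wt l F σ T) h).choose_spec.1

lemma pick_max {l F : ℕ} (hl : 0 < l) (σ : St n) (T : Finset (Fin n)) :
    ∀ b ∈ Finset.range l, Wt l F σ T b ≤ Wt l F σ T (pick l F σ T) := by
  have h : (Finset.range l).Nonempty := ⟨0, by simpa using hl⟩
  rw [pick, dif_pos h]
  exact (Finset.exists_max_image (Finset.range l) (Wt l F σ T) h).choose_spec.2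

noncomputable def stepSt (l F : ℕ) (σ : St n) (T : Finset (Fin n)) : St n :=
  ⟨fun b => if b = pick l F σ T then σ.cov b ∪ T else σ.cov b,
   fun i => σ.cnt i + if i ∈ T then 1 else 0⟩

noncomputable def Phi (l F : ℕ) (σ : St n) : ℝ :=
  ∑ b ∈ Finset.range l, ∑ i ∈ Finset.univ \ σ.cov b, phi l F σ.cnt i

lemma q_nonneg {l : ℕ} (hl : 1 ≤ l) : (0:ℝ) ≤ 1 - 1 / (l : ℝ) := by
  have h1 : (1:ℝ) ≤ l := by exact_mod_cast hl
  have h0 : (0:ℝ) < l := by linarith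
  have : 1 / (l:ℝ) ≤ 1 := by rw [div_le_one h0]; exact h1
  linarith

lemma q_le_one {l : ℕ} (hl : 1 ≤ l) : (1 - 1 / (l : ℝ)) ≤ 1 := by
  have h0 : (0:ℝ) < l := by exact_mod_cast hl
  have : 0 < 1 / (l:ℝ) := by positivity
  linarith

lemma phi_nonneg {l F : ℕ} (hl : 1 ≤ l) (cnt : Fin n → ℕ) (i : Fin n) :
    0 ≤ phi l F cnt i := pow_nonneg (q_nonneg hl) _

lemma Wt_nonneg {l F : ℕ} (hl : 1 ≤ l) (σ : St n) (T : Finset (Fin n)) (b : ℕ) :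
    0 ≤ Wt l F σ T b :=
  Finset.sum_nonneg fun i _ => phi_nonneg hl _ i

lemma q_mul_pow_le {q : ℝ} (hq1 : q ≤ 1) (F c : ℕ) :
    q * q ^ (F - (c + 1)) ≤ q ^ (F - c) := by
  rcases le_or_gt F c with h | h
  · rw [Nat.sub_eq_zero_of_le h, Nat.sub_eq_zero_of_le (h.trans (Nat.le_succ c))]
    simpa using hq1
  · have : F - c = (F - (c + 1)) + 1 := by omega
    rw [this, pow_succ]
    ring_nf
    exact le_refl _

lemma Phi_step {l F : ℕ} (hl : 1 ≤ l) (σ : St n) (T : Finset (Fin n)) :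
    Phi l F (stepSt l F σ T) ≤ Phi l F σ := by
  classical
  set σ' := stepSt l F σ T with hσ'
  set b' := pick l F σ T with hb'
  set q : ℝ := 1 - 1 / (l : ℝ) with hq
  have hq0 : 0 ≤ q := q_nonneg hl
  have hq1 : q ≤ 1 := q_le_one hl
  have hb'mem : b' ∈ Finset.range l := pick_mem hl σ T
  -- new phi off T
  have hphi_off : ∀ i : Fin n, i ∉ T → phi l F σ'.cnt i = phi l F σ.cnt i := by
    intro i hi; simp [phi, hσ', stepSt, hi]
  have hphi_on : ∀ i : Fin n, i ∈ T →
      phi l F σ'.cnt i = q ^ (F - (σ.cnt i + 1)) := by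
    intro i hi; simp [phi, hσ', stepSt, hi, hq]
  -- set identities
  have hset1 : ∀ b, (Finset.univ \ σ.cov b).filter (fun i => i ∈ T) = T \ σ.cov b := by
    intro b; ext i; simp [Finset.mem_filter, Finset.mem_sdiff]; tauto
  have hset2 : ∀ b, (Finset.univ \ σ'.cov b).filter (fun i => i ∉ T)
      = (Finset.univ \ σ.cov b).filter (fun i => i ∉ T) := by
    intro b; ext i
    by_cases hb : b = b' <;>
      simp [hσ', stepSt, ← hb', hb, Finset.mem_filter, Finset.mem_sdiff] <;> tauto
  have hset3 : ∀ b, b ≠ b' → (Finset.univ \ σ'.cov b).filter (fun i => i ∈ T)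
      = T \ σ.cov b := by
    intro b hb; ext i
    simp [hσ', stepSt, ← hb', hb, Finset.mem_filter, Finset.mem_sdiff]; tauto
  have hset3' : (Finset.univ \ σ'.cov b').filter (fun i => i ∈ T) = ∅ := by
    ext i; simp [hσ', stepSt, ← hb', Finset.mem_filter, Finset.mem_sdiff]
  -- decompositions
  have hPhiOld : Phi l F σ = ∑ b ∈ Finset.range l,
      (Wt l F σ T b + ∑ i ∈ (Finset.univ \ σ.cov b).filter (fun i => i ∉ T),
        phi l F σ.cnt i) := by
    unfold Phi Wt
    refine Finset.sum_congr rfl fun b _ => ?_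
    rw [← hset1 b, Finset.sum_filter_add_sum_filter_not]
  have hPhiNew : Phi l F σ' = ∑ b ∈ Finset.range l,
      ((if b = b' then 0 else ∑ i ∈ T \ σ.cov b, phi l F σ'.cnt i)
        + ∑ i ∈ (Finset.univ \ σ.cov b).filter (fun i => i ∉ T), phi l F σ.cnt i) := by
    unfold Phi
    refine Finset.sum_congr rfl fun b _ => ?_
    rw [← Finset.sum_filter_add_sum_filter_not (Finset.univ \ σ'.cov b)
      (fun i => i ∈ T) (phi l F σ'.cnt)]
    congr 1
    · by_cases hb : b = b'
      · rw [if_pos hb, hb, hset3']; simp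
      · rw [if_neg hb, hset3 b hb]
    · rw [hset2 b]
      exact Finset.sum_congr rfl fun i hi =>
        hphi_off i (Finset.mem_filter.mp hi).2
  rw [hPhiOld, hPhiNew, Finset.sum_add_distrib, Finset.sum_add_distrib]
  refine add_le_add ?_ le_rfl
  -- main inequality
  set W' : ℕ → ℝ := fun b => ∑ i ∈ T \ σ.cov b, phi l F σ'.cnt i with hW'
  have hW'nonneg : ∀ b, 0 ≤ W' b :=
    fun b => Finset.sum_nonneg fun i _ => phi_nonneg hl _ i
  have hLHS : ∑ b ∈ Finset.range l, (if b = b' then 0 else W' b)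
      = ∑ b ∈ (Finset.range l).erase b', W' b := by
    rw [← Finset.add_sum_erase _ _ hb'mem, if_pos rfl, zero_add]
    exact Finset.sum_congr rfl fun b hb => if_neg (Finset.ne_of_mem_erase hb)
  rw [hLHS]
  have hqW : ∀ b, q * W' b ≤ Wt l F σ T b := by
    intro b
    rw [hW', Finset.mul_sum]
    refine Finset.sum_le_sum fun i hi => ?_
    have hiT : i ∈ T := (Finset.mem_sdiff.mp hi).1
    rw [hphi_on i hiT]
    have : phi l F σ.cnt i = q ^ (F - σ.cnt i) := rfl
    rw [this]
    exact q_mul_pow_le hq1 F (σ.cnt i)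
  rcases eq_or_lt_of_le hl with h1 | h2
  · -- l = 1
    have hb0 : b' = 0 := by
      have := hb'mem; rw [← h1] at this; simpa using this
    have hempty : (Finset.range l).erase b' = ∅ := by
      rw [← h1, hb0]; simp
    rw [hempty, Finset.sum_empty]
    exact Finset.sum_nonneg fun b _ => Wt_nonneg hl σ T b
  · -- 2 ≤ l
    have hl2 : (2:ℝ) ≤ l := by exact_mod_cast h2
    have hqpos : 0 < q := by
      rw [hq]
      have : 1 / (l:ℝ) ≤ 1/2 := by
        apply div_le_div_of_nonneg_left <;> linarith
      linarith
    rw [← mul_le_mul_iff_right₀ hqpos, Finset.mul_sum]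
    calc ∑ b ∈ (Finset.range l).erase b', q * W' b
        ≤ ∑ b ∈ (Finset.range l).erase b', Wt l F σ T b :=
          Finset.sum_le_sum fun b _ => hqW b
      _ = (∑ b ∈ Finset.range l, Wt l F σ T b) - Wt l F σ T b' := by
          rw [← Finset.add_sum_erase _ _ hb'mem]; ring
      _ ≤ q * ∑ b ∈ Finset.range l, Wt l F σ T b := by
          have hlpos : (0:ℝ) < l := by linarith
          have hsum : ∑ b ∈ Finset.range l, Wt l F σ T b ≤ Wt l F σ T b' * l := by
            calc ∑ b ∈ Finset.range l, Wt l F σ T b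
                ≤ ∑ _b ∈ Finset.range l, Wt l F σ T b' :=
                  Finset.sum_le_sum (pick_max hl σ T)
              _ = Wt l F σ T b' * l := by
                  rw [Finset.sum_const, Finset.card_range, nsmul_eq_mul]; ring
          have hWm : (∑ b ∈ Finset.range l, Wt l F σ T b) / l ≤ Wt l F σ T b' :=
            (div_le_iff₀ hlpos).mpr hsum
          have hqS : q * ∑ b ∈ Finset.range l, Wt l F σ T b
              = (∑ b ∈ Finset.range l, Wt l F σ T b)
                - (∑ b ∈ Finset.range l, Wt l F σ T b) / l := by
            rw [hq]; ring
          rw [hqS]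
          linarith

noncomputable def run (l F : ℕ) (P : List (Finset (Fin n))) : St n :=
  P.foldl (stepSt l F) ⟨fun _ => ∅, fun _ => 0⟩

noncomputable def algo (n l F : ℕ) (P : List (Finset (Fin n))) : ℕ :=
  pick l F (run l F P.dropLast) (P.getLast?.getD ∅)

lemma Phi_foldl {l F : ℕ} (hl : 1 ≤ l) (S : List (Finset (Fin n))) :
    ∀ σ : St n, Phi l F (S.foldl (stepSt l F) σ) ≤ Phi l F σ := by
  induction S with
  | nil => intro σ; simp
  | cons T S ih =>
    intro σ
    simp only [List.foldl_cons]
    exact (ih (stepSt l F σ T)).trans (Phi_step hl σ T)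

lemma Phi_init {l F : ℕ} :
    Phi l F (⟨fun _ => ∅, fun _ => 0⟩ : St n)
      = (l : ℝ) * n * (1 - 1 / (l : ℝ)) ^ F := by
  simp [Phi, phi, Finset.sum_const, Finset.card_univ]
  ring

lemma cnt_foldl {l F : ℕ} (S : List (Finset (Fin n))) :
    ∀ (σ : St n) (i : Fin n),
      (S.foldl (stepSt l F) σ).cnt i = σ.cnt i + freqL S i := by
  induction S with
  | nil => intro σ i; simp [freqL]
  | cons T S ih =>
    intro σ i
    simp only [List.foldl_cons]
    rw [ih]
    simp [freqL, stepSt, List.countP_cons]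
    by_cases hi : i ∈ T <;> simp [hi] <;> omega

lemma binUnion_nil {l F : ℕ} (A : List (Finset (Fin n)) → ℕ) (b : ℕ) :
    binUnion A ([] : List (Finset (Fin n))) b = ∅ := by
  simp [binUnion]

lemma binUnion_concat (A : List (Finset (Fin n)) → ℕ)
    (P : List (Finset (Fin n))) (T : Finset (Fin n)) (b : ℕ) :
    binUnion A (P ++ [T]) b
      = (if A (P ++ [T]) = b then T else ∅) ∪ binUnion A P b := by
  unfold binUnion
  rw [List.length_append, List.length_cons, List.length_nil]
  rw [Finset.range_add_one, Finset.sup_insert]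
  have h1 : (P ++ [T]).take (P.length + 1) = P ++ [T] := by
    apply List.take_of_length_le
    simp
  have h2 : (P ++ [T]).getD P.length ∅ = T := by
    simp [List.getD]
  rw [h1, h2]
  congr 1
  apply Finset.sup_congr rfl
  intro j hj
  rw [Finset.mem_range] at hj
  have h3 : (P ++ [T]).take (j + 1) = P.take (j + 1) :=
    List.take_append_of_le_length (by omega)
  have h4 : (P ++ [T]).getD j ∅ = P.getD j ∅ := by
    simp [List.getD, List.getElem?_append_left (by omega : j < P.length)]
  rw [h3, h4]

lemma algo_concat {l F : ℕ} (P : List (Finset (Fin n))) (T : Finset (Fin n)) :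
    algo n l F (P ++ [T]) = pick l F (run l F P) T := by
  unfold algo
  rw [List.dropLast_concat, List.getLast?_concat]
  rfl

lemma run_concat {l F : ℕ} (P : List (Finset (Fin n))) (T : Finset (Fin n)) :
    run l F (P ++ [T]) = stepSt l F (run l F P) T := by
  unfold run
  rw [List.foldl_concat]

lemma binUnion_eq_cov {l F : ℕ} (S : List (Finset (Fin n))) (b : ℕ) :
    binUnion (algo n l F) S b = (run l F S).cov b := by
  induction S using List.reverseRecOn with
  | nil => simp [binUnion, run]
  | append_singleton P T ih =>
    rw [binUnion_concat, run_concat, algo_concat, ih]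
    unfold stepSt
    simp only
    by_cases hb : b = pick l F (run l F P) T
    · rw [if_pos hb, if_pos hb.symm, Finset.union_comm]
    · rw [if_neg (fun h => hb h.symm), if_neg hb, Finset.empty_union]

lemma full_card_le_T {l F : ℕ} (hn : 1 ≤ n) (S : List (Finset (Fin n))) :
    ((Finset.range l).filter fun b => (run l F S).cov b = Finset.univ).card
      ≤ TonlineU (algo n l F) S := by
  haveI : Nonempty (Fin n) := ⟨⟨0, by omega⟩⟩
  unfold TonlineU
  apply Finset.card_le_card
  intro b hb
  rw [Finset.mem_filter] at hb
  have hbu : binUnion (algo n l F) S b = Finset.univ := by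
    rw [binUnion_eq_cov]; exact hb.2
  rw [Finset.mem_filter]
  refine ⟨?_, hbu⟩
  by_contra hmem
  have hall : ∀ j ∈ Finset.range S.length,
      (if algo n l F (S.take (j + 1)) = b then S.getD j ∅ else ∅) = (⊥ : Finset (Fin n)) := by
    intro j hj
    have hAb : ¬ algo n l F (S.take (j + 1)) = b := fun hAb =>
      hmem (Finset.mem_image.mpr ⟨j, hj, hAb⟩)
    simp [hAb]
  have : binUnion (algo n l F) S b = ⊥ := by
    unfold binUnion
    exact (Finset.sup_eq_bot_iff _ _).mpr hall
  rw [hbu] at this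
  exact (Finset.univ_nonempty).ne_empty this

theorem key (hn2 : 2 ≤ n) {l F : ℕ} (hl : 1 ≤ l) (S : List (Finset (Fin n)))
    (hF : FminL S = F)
    (hlF : (l : ℝ) * Real.log ((n : ℝ) * Real.log n) ≤ F) :
    (l : ℝ) - (l : ℝ) / Real.log n ≤ (TonlineU (algo n l F) S : ℝ) := by
  haveI : Nonempty (Fin n) := ⟨⟨0, by omega⟩⟩
  have hn1 : (1:ℝ) < n := by exact_mod_cast hn2
  have hlogn : 0 < Real.log n := Real.log_pos hn1
  have h2n : (2:ℝ) ≤ n := by exact_mod_cast hn2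
  have hlog2 : Real.log 2 ≤ Real.log n := Real.log_le_log (by norm_num) h2n
  have hl2 : (0.6931471803 : ℝ) < Real.log 2 := Real.log_two_gt_d9
  have hnl : (1:ℝ) < (n : ℝ) * Real.log n := by nlinarith
  have hnlpos : (0:ℝ) < (n : ℝ) * Real.log n := by linarith
  have hL : 0 < Real.log ((n : ℝ) * Real.log n) := Real.log_pos hnl
  have hlpos : (0:ℝ) < l := by exact_mod_cast hl
  set q : ℝ := 1 - 1 / (l : ℝ) with hq
  have hq0 : 0 ≤ q := q_nonneg hl
  -- counts at the end are at least F
  have hcnt : ∀ i : Fin n, F ≤ (run l F S).cnt i := by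
    intro i
    have h1 : (run l F S).cnt i = freqL S i := by
      unfold run
      rw [cnt_foldl]
      simp
    rw [h1, ← hF]
    exact Nat.sInf_le ⟨i, rfl⟩
  -- Phi at the end counts uncovered pairs
  have hPhiFin : Phi l F (run l F S)
      = ∑ b ∈ Finset.range l, ((Finset.univ \ (run l F S).cov b).card : ℝ) := by
    unfold Phi
    refine Finset.sum_congr rfl fun b _ => ?_
    rw [Finset.sum_congr rfl (fun i _ => ?_), Finset.sum_const, nsmul_eq_mul, mul_one]
    show phi l F (run l F S).cnt i = 1
    unfold phi
    rw [Nat.sub_eq_zero_of_le (hcnt i), pow_zero]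
  set unfull := (Finset.range l).filter (fun b => ¬((run l F S).cov b = Finset.univ))
    with hunfull
  have hcount : (unfull.card : ℝ) ≤ Phi l F (run l F S) := by
    rw [hPhiFin]
    calc (unfull.card : ℝ) = ∑ _b ∈ unfull, (1:ℝ) := by simp
      _ ≤ ∑ b ∈ unfull, ((Finset.univ \ (run l F S).cov b).card : ℝ) := by
          refine Finset.sum_le_sum fun b hb => ?_
          rw [hunfull, Finset.mem_filter] at hb
          have hne : (Finset.univ \ (run l F S).cov b).Nonempty := by
            rw [Finset.sdiff_nonempty]
            intro hsub
            exact hb.2 (Finset.univ_subset_iff.mp hsub)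
          have := Finset.card_pos.mpr hne
          exact_mod_cast this
      _ ≤ ∑ b ∈ Finset.range l, ((Finset.univ \ (run l F S).cov b).card : ℝ) :=
          Finset.sum_le_sum_of_subset_of_nonneg (Finset.filter_subset _ _)
            (fun b _ _ => by positivity)
  have hPhiBound : Phi l F (run l F S) ≤ (l : ℝ) * n * q ^ F := by
    rw [← Phi_init (l := l) (F := F) (n := n)]
    exact Phi_foldl hl S _
  -- q ^ F ≤ (n log n)⁻¹
  have hqexp : q ≤ Real.exp (-(1 / (l:ℝ))) := by
    have := Real.add_one_le_exp (-(1 / (l:ℝ)))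
    rw [hq]; linarith
  have hqF : q ^ F ≤ ((n : ℝ) * Real.log n)⁻¹ := by
    calc q ^ F ≤ (Real.exp (-(1 / (l:ℝ)))) ^ F := pow_le_pow_left₀ hq0 hqexp F
      _ = Real.exp ((F : ℝ) * -(1 / (l:ℝ))) := (Real.exp_nat_mul _ F).symm
      _ ≤ Real.exp (-Real.log ((n : ℝ) * Real.log n)) := by
          rw [Real.exp_le_exp]
          have hdiv : Real.log ((n : ℝ) * Real.log n) ≤ (F : ℝ) / l :=
            (le_div_iff₀ hlpos).mpr (by linarith [hlF])
          have : (F : ℝ) * -(1 / (l:ℝ)) = -((F : ℝ) / l) := by ring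
          rw [this]
          linarith
      _ = ((n : ℝ) * Real.log n)⁻¹ := by
          rw [Real.exp_neg, Real.exp_log hnlpos]
  have hunfullBound : (unfull.card : ℝ) ≤ (l : ℝ) / Real.log n := by
    have h1 : (l : ℝ) * n * q ^ F ≤ (l : ℝ) * n * ((n : ℝ) * Real.log n)⁻¹ := by
      apply mul_le_mul_of_nonneg_left hqF
      positivity
    have h2 : (l : ℝ) * n * ((n : ℝ) * Real.log n)⁻¹ = (l : ℝ) / Real.log n := by
      have hn0 : (n:ℝ) ≠ 0 := by linarith
      have hlog0 : Real.log n ≠ 0 := ne_of_gt hlogn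
      field_simp
    linarith
  -- assemble
  set full := (Finset.range l).filter (fun b => (run l F S).cov b = Finset.univ)
    with hfull
  have hsplit : full.card + unfull.card = l := by
    rw [hfull, hunfull, Finset.card_filter_add_card_filter_not, Finset.card_range]
  have hT : (full.card : ℕ) ≤ TonlineU (algo n l F) S :=
    full_card_le_T (by omega) S
  have hTr : (full.card : ℝ) ≤ (TonlineU (algo n l F) S : ℝ) := by exact_mod_cast hT
  have hfc : (full.card : ℝ) + (unfull.card : ℝ) = (l : ℝ) := by exact_mod_cast hsplit
  linarith

end Scratch

/-- (PolyOn guarantee) For every `n ≥ 2` there is a deterministic online algorithm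
`A` (given `F_min` in advance) such that for every arrival sequence `S` of subsets
of `Fin n` with `F_min(S) = F`, setting `l = ⌊F / ln (n * ln n)⌋`, if `l ≥ 1` then
the online allocation produces at least `l - l / ln n` bins whose union is `Fin n`. -/
theorem stmt5 (n : ℕ) (hn : 2 ≤ n) :
    ∃ A : ℕ → List (Finset (Fin n)) → ℕ,
      ∀ (S : List (Finset (Fin n))) (F l : ℕ),
        FminL S = F →
        l = ⌊(F : ℝ) / Real.log ((n : ℝ) * Real.log n)⌋₊ →
        1 ≤ l →
        (l : ℝ) - (l : ℝ) / Real.log n ≤ (TonlineU (A F) S : ℝ) := by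
  refine ⟨fun F => Scratch.algo n (⌊(F : ℝ) / Real.log ((n : ℝ) * Real.log n)⌋₊) F, ?_⟩
  intro S F l hF hl hl1
  have hn1 : (1:ℝ) < n := by exact_mod_cast hn
  have h2n : (2:ℝ) ≤ n := by exact_mod_cast hn
  have hlogn : 0 < Real.log n := Real.log_pos hn1
  have hlog2 : Real.log 2 ≤ Real.log n := Real.log_le_log (by norm_num) h2n
  have hlt2 : (0.6931471803 : ℝ) < Real.log 2 := Real.log_two_gt_d9
  have hnl : (1:ℝ) < (n : ℝ) * Real.log n := by nlinarith
  have hL : 0 < Real.log ((n : ℝ) * Real.log n) := Real.log_pos hnl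
  subst hl
  have hfl : (⌊(F : ℝ) / Real.log ((n : ℝ) * Real.log n)⌋₊ : ℝ)
      ≤ (F : ℝ) / Real.log ((n : ℝ) * Real.log n) :=
    Nat.floor_le (by positivity)
  have hlF : (⌊(F : ℝ) / Real.log ((n : ℝ) * Real.log n)⌋₊ : ℝ)
      * Real.log ((n : ℝ) * Real.log n) ≤ F := by
    have := mul_le_mul_of_nonneg_right hfl (le_of_lt hL)
    rwa [div_mul_cancel₀ _ (ne_of_gt hL)] at this
  exact Scratch.key hn hl1 S hF hlF
end

section
/- (Theorem: an O(ln n)-competitive online algorithm exists) There exists a constant C > 0 such that for every n >= 2 there is a function A : ℕ -> List (Finset (Fin n)) -> ℕ (a deterministic online algorithm that is given F_min in advance) with the property: for every nonempty finite sequence S of subsets of Fin n whose union is Fin n, T(A(F_min(S)), S) >= 1 and T_opt(S) <= C * (ln n) * T(A(F_min(S)), S). -/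
/-- `T_opt(S)`: the maximum number of pairwise disjoint subfamilies of `S`
(disjoint as index sets) each of whose union is the whole universe. -/
noncomputable def ToptL {U : Type*} (S : List (Finset U)) : ℕ :=
  sSup {k | ∃ C : Fin k → Finset (Fin S.length),
    (∀ a b, a ≠ b → Disjoint (C a) (C b)) ∧
    ∀ a, ∀ u : U, ∃ j ∈ C a, u ∈ S.get j}


open Finset

section Aux

variable {n : ℕ}

abbrev StA (n : ℕ) := (Fin n → ℕ) × (ℕ → Finset (Fin n))

noncomputable def vv (x : ℝ) (F s : ℕ) : ℝ := x ^ (F - s)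

noncomputable def gainSum (x : ℝ) (F : ℕ) (σ : StA n) (S : Finset (Fin n)) (c : ℕ) : ℝ :=
  ∑ i ∈ (Finset.univ \ σ.2 c) ∩ S, vv x F (σ.1 i + 1)

noncomputable def pick (k : ℕ) (x : ℝ) (F : ℕ) (σ : StA n) (S : Finset (Fin n)) : ℕ :=
  if h : (Finset.range k).Nonempty then
    ((Finset.range k).exists_max_image (gainSum x F σ S) h).choose
  else 0

lemma pick_mem (k : ℕ) (hk : 0 < k) (x : ℝ) (F : ℕ) (σ : StA n) (S : Finset (Fin n)) :
    pick k x F σ S ∈ Finset.range k := by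
  have h : (Finset.range k).Nonempty := ⟨0, Finset.mem_range.2 hk⟩
  rw [pick, dif_pos h]
  exact ((Finset.range k).exists_max_image (gainSum x F σ S) h).choose_spec.1

lemma pick_max (k : ℕ) (hk : 0 < k) (x : ℝ) (F : ℕ) (σ : StA n) (S : Finset (Fin n)) :
    ∀ c ∈ Finset.range k, gainSum x F σ S c ≤ gainSum x F σ S (pick k x F σ S) := by
  have h : (Finset.range k).Nonempty := ⟨0, Finset.mem_range.2 hk⟩
  rw [pick, dif_pos h]
  exact fun c hc =>
    ((Finset.range k).exists_max_image (gainSum x F σ S) h).choose_spec.2 c hc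

noncomputable def stepA (k : ℕ) (x : ℝ) (F : ℕ) (σ : StA n) (S : Finset (Fin n)) : StA n :=
  ⟨fun i => σ.1 i + (if i ∈ S then 1 else 0),
   fun c => if c = pick k x F σ S then σ.2 c ∪ S else σ.2 c⟩

noncomputable def runA (k : ℕ) (x : ℝ) (F : ℕ) (l : List (Finset (Fin n))) : StA n :=
  l.foldl (stepA k x F) ⟨fun _ => 0, fun _ => ∅⟩

noncomputable def Aalg (k : ℕ) (x : ℝ) (F : ℕ) (l : List (Finset (Fin n))) : ℕ :=
  pick k x F (runA k x F l.dropLast) (l.getLastD ∅)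

noncomputable def Phi (k : ℕ) (x : ℝ) (F : ℕ) (σ : StA n) : ℝ :=
  ∑ b ∈ Finset.range k, ∑ i ∈ Finset.univ \ σ.2 b, vv x F (σ.1 i)

lemma phi_step (k : ℕ) (hk : 2 ≤ k) (F : ℕ) (σ : StA n) (S : Finset (Fin n)) :
    Phi k (1 - 1/(k:ℝ)) F (stepA k (1 - 1/(k:ℝ)) F σ S) ≤ Phi k (1 - 1/(k:ℝ)) F σ := by
  set x := 1 - 1/(k:ℝ) with hxdef
  have hk0 : (0:ℝ) < k := by exact_mod_cast Nat.lt_of_lt_of_le (by norm_num) hk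
  have hk1 : 1/(k:ℝ) ≤ 1 := by
    rw [div_le_one hk0]; exact_mod_cast Nat.le_of_lt (Nat.lt_of_lt_of_le (by norm_num) hk)
  have hx0 : 0 ≤ x := by simp only [hxdef]; linarith
  have hinv : 0 ≤ 1/(k:ℝ) := by positivity
  have hx1 : x ≤ 1 := by simp only [hxdef]; linarith
  have hvnn : ∀ s, 0 ≤ vv x F s := fun s => pow_nonneg hx0 _
  have hkey : ∀ s, x * vv x F (s+1) ≤ vv x F s := by
    intro s
    rcases lt_or_ge s F with h | h
    · have he : F - s = (F - (s+1)) + 1 := by omega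
      rw [vv, vv, he, pow_succ]
      exact le_of_eq (mul_comm _ _)
    · have h1 : F - s = 0 := by omega
      have h2 : F - (s+1) = 0 := by omega
      simp only [vv, h1, h2, pow_zero, mul_one]
      exact hx1
  set b := pick k x F σ S with hb
  have hbmem : b ∈ Finset.range k := pick_mem k (by omega) x F σ S
  have main : Phi k x F (stepA k x F σ S)
      = ∑ c ∈ Finset.range k, ((∑ i ∈ (Finset.univ \ σ.2 c) \ S, vv x F (σ.1 i))
          + if c = b then 0 else gainSum x F σ S c) := by
    rw [Phi]
    apply Finset.sum_congr rfl
    intro c _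
    by_cases hcb : c = b
    · rw [if_pos hcb]
      have hcov : (stepA k x F σ S).2 c = σ.2 c ∪ S := by
        simp only [stepA, ← hb, if_pos hcb]
      rw [hcov]
      have hset : (Finset.univ \ (σ.2 c ∪ S)) = (Finset.univ \ σ.2 c) \ S := by
        ext i; simp only [Finset.mem_sdiff, Finset.mem_union, Finset.mem_univ, true_and]; tauto
      rw [hset, add_zero]
      apply Finset.sum_congr rfl
      intro i hi
      have hiS : i ∉ S := (Finset.mem_sdiff.1 hi).2
      simp only [stepA, if_neg hiS, add_zero]
    · rw [if_neg hcb]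
      have hcov : (stepA k x F σ S).2 c = σ.2 c := by
        simp only [stepA, ← hb, if_neg hcb]
      rw [hcov]
      rw [← Finset.sum_inter_add_sum_sdiff (Finset.univ \ σ.2 c) S
        (fun i => vv x F ((stepA k x F σ S).1 i))]
      rw [add_comm]
      congr 1
      · apply Finset.sum_congr rfl
        intro i hi
        have hiS : i ∉ S := (Finset.mem_sdiff.1 hi).2
        simp only [stepA, if_neg hiS, add_zero]
      · rw [gainSum]
        apply Finset.sum_congr rfl
        intro i hi
        have hiS : i ∈ S := (Finset.mem_inter.1 hi).2
        simp only [stepA, if_pos hiS]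
  have main2 : Phi k x F σ = ∑ c ∈ Finset.range k,
      ((∑ i ∈ (Finset.univ \ σ.2 c) \ S, vv x F (σ.1 i))
        + ∑ i ∈ (Finset.univ \ σ.2 c) ∩ S, vv x F (σ.1 i)) := by
    rw [Phi]
    apply Finset.sum_congr rfl
    intro c _
    rw [add_comm, Finset.sum_inter_add_sum_sdiff]
  rw [main, main2, Finset.sum_add_distrib, Finset.sum_add_distrib]
  apply add_le_add le_rfl
  -- key aggregate inequality
  have hAnn : ∀ c, 0 ≤ gainSum x F σ S c := fun c =>
    Finset.sum_nonneg fun i _ => hvnn _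
  have hsum_ite : ∑ c ∈ Finset.range k, (if c = b then 0 else gainSum x F σ S c)
      = ∑ c ∈ (Finset.range k).erase b, gainSum x F σ S c := by
    rw [← Finset.add_sum_erase _ _ hbmem, if_pos rfl, zero_add]
    exact Finset.sum_congr rfl fun c hc => if_neg (Finset.mem_erase.1 hc).1
  rw [hsum_ite]
  have hBA : ∀ c, x * gainSum x F σ S c ≤ ∑ i ∈ (Finset.univ \ σ.2 c) ∩ S, vv x F (σ.1 i) := by
    intro c
    rw [gainSum, Finset.mul_sum]
    exact Finset.sum_le_sum fun i _ => hkey _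
  have havg : (1/(k:ℝ)) * ∑ c ∈ Finset.range k, gainSum x F σ S c ≤ gainSum x F σ S b := by
    have h1 : ∑ c ∈ Finset.range k, gainSum x F σ S c ≤ (k:ℝ) * gainSum x F σ S b := by
      have := Finset.sum_le_card_nsmul (Finset.range k) (gainSum x F σ S)
        (gainSum x F σ S b) (pick_max k (by omega) x F σ S)
      simpa [Finset.card_range, nsmul_eq_mul] using this
    rw [one_div, inv_mul_le_iff₀ hk0] at *
    linarith [h1]
  have herase : ∑ c ∈ (Finset.range k).erase b, gainSum x F σ S c
      = (∑ c ∈ Finset.range k, gainSum x F σ S c) - gainSum x F σ S b := by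
    rw [← Finset.add_sum_erase _ _ hbmem]; ring
  calc ∑ c ∈ (Finset.range k).erase b, gainSum x F σ S c
      = (∑ c ∈ Finset.range k, gainSum x F σ S c) - gainSum x F σ S b := herase
    _ ≤ x * ∑ c ∈ Finset.range k, gainSum x F σ S c := by
        have hs : 0 ≤ ∑ c ∈ Finset.range k, gainSum x F σ S c :=
          Finset.sum_nonneg fun c _ => hAnn c
        simp only [hxdef]
        have : (1/(k:ℝ)) * ∑ c ∈ Finset.range k, gainSum x F σ S c ≤ gainSum x F σ S b := havg
        ring_nf
        simp only [hxdef] at this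
        ring_nf at this
        linarith
    _ ≤ ∑ c ∈ Finset.range k, ∑ i ∈ (Finset.univ \ σ.2 c) ∩ S, vv x F (σ.1 i) := by
        rw [Finset.mul_sum]
        exact Finset.sum_le_sum fun c _ => hBA c

end Aux

section Bridge

variable {n : ℕ}

lemma freqL_cons (s : Finset (Fin n)) (l : List (Finset (Fin n))) (i : Fin n) :
    freqL (s :: l) i = freqL l i + (if i ∈ s then 1 else 0) := by
  simp [freqL, List.countP_cons]

lemma binUnion_nil (A : List (Finset (Fin n)) → ℕ) (b : ℕ) :
    binUnion A [] b = ∅ := by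
  simp [binUnion]

lemma binUnion_concat (A : List (Finset (Fin n)) → ℕ) (l : List (Finset (Fin n)))
    (S : Finset (Fin n)) (b : ℕ) :
    binUnion A (l ++ [S]) b
      = (if A (l ++ [S]) = b then S else ∅) ∪ binUnion A l b := by
  have hlen : (l ++ [S]).length = l.length + 1 := by simp
  rw [binUnion, hlen, Finset.range_add_one, Finset.sup_insert]
  have h1 : (l ++ [S]).take (l.length + 1) = l ++ [S] := by
    rw [← hlen, List.take_length]
  have h2 : (l ++ [S]).getD l.length ∅ = S := by
    rw [List.getD_append_right _ _ _ _ le_rfl, Nat.sub_self]; rfl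
  rw [h1, h2]
  have h3 : ((Finset.range l.length).sup fun j =>
      if A ((l ++ [S]).take (j + 1)) = b then (l ++ [S]).getD j ∅ else ∅)
      = binUnion A l b := by
    rw [binUnion]
    apply Finset.sup_congr rfl
    intro j hj
    have hj' : j < l.length := Finset.mem_range.1 hj
    rw [List.take_append_of_le_length (by omega), List.getD_append _ _ _ _ hj']
  rw [h3]
  rfl

end Bridge

section More

variable {n : ℕ}

lemma card_filter_eq_freqL (l : List (Finset (Fin n))) (i : Fin n) :
    (Finset.univ.filter (fun j : Fin l.length => i ∈ l.get j)).card = freqL l i := by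
  induction l with
  | nil => simp [freqL]
  | cons s l ih =>
    rw [freqL, List.countP_cons, ← freqL]
    rw [Finset.card_filter]
    simp only [List.length_cons]
    rw [Fin.sum_univ_succ]
    simp only [List.get_eq_getElem, Fin.val_zero, Fin.val_succ, List.getElem_cons_zero, List.getElem_cons_succ]
    rw [← Finset.card_filter]
    simp only [List.get_eq_getElem] at ih
    rw [ih]
    simp only [decide_eq_true_eq]
    by_cases h : i ∈ s <;> simp [h] <;> omega

lemma toptL_le_fmin (hn : 0 < n) (S : List (Finset (Fin n))) : ToptL S ≤ FminL S := by
  have : Nonempty (Fin n) := ⟨⟨0, hn⟩⟩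
  obtain ⟨i₀, hi₀⟩ : ∃ i₀ : Fin n, freqL S i₀ = FminL S := by
    have hne : (Set.range fun i : Fin n => freqL S i).Nonempty := Set.range_nonempty _
    exact Nat.sInf_mem hne
  have hmem0 : 0 ∈ {k | ∃ C : Fin k → Finset (Fin S.length),
      (∀ a b, a ≠ b → Disjoint (C a) (C b)) ∧
      ∀ a, ∀ u : Fin n, ∃ j ∈ C a, u ∈ S.get j} :=
    ⟨fun a => a.elim0, fun a => a.elim0, fun a => a.elim0⟩
  apply csSup_le ⟨0, hmem0⟩
  rintro k ⟨C, hdisj, hcov⟩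
  choose g hg1 hg2 using fun a : Fin k => hcov a i₀
  have hinj : Function.Injective g := by
    intro a b hab
    by_contra hne
    exact (Finset.disjoint_left.1 (hdisj a b hne)) (hg1 a) (hab ▸ hg1 b)
  calc k = (Finset.univ : Finset (Fin k)).card := by simp
    _ ≤ (Finset.univ.filter (fun j : Fin S.length => i₀ ∈ S.get j)).card := by
        apply Finset.card_le_card_of_injOn g
        · intro a _
          exact Finset.mem_filter.2 ⟨Finset.mem_univ _, hg2 a⟩
        · exact hinj.injOn
    _ = freqL S i₀ := card_filter_eq_freqL S i₀
    _ = FminL S := hi₀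

lemma sup_getD_univ (S : List (Finset (Fin n)))
    (hcov : ∀ u : Fin n, ∃ s ∈ S, u ∈ s) :
    (Finset.range S.length).sup (fun j => S.getD j ∅) = Finset.univ := by
  apply Finset.eq_univ_of_forall
  intro u
  obtain ⟨s, hsS, hus⟩ := hcov u
  obtain ⟨j, hj⟩ := List.mem_iff_get.1 hsS
  apply Finset.mem_sup.2
  refine ⟨j.1, Finset.mem_range.2 j.isLt, ?_⟩
  rw [List.getD_eq_getElem _ _ j.isLt]
  rw [← hj] at hus
  simpa [List.get_eq_getElem] using hus

end More

section Main
variable {n : ℕ}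

lemma runA_concat (k : ℕ) (x : ℝ) (F : ℕ) (l : List (Finset (Fin n))) (S : Finset (Fin n)) :
    runA k x F (l ++ [S]) = stepA k x F (runA k x F l) S := by
  rw [runA, runA, List.foldl_concat]

lemma Aalg_concat (k : ℕ) (x : ℝ) (F : ℕ) (l : List (Finset (Fin n))) (S : Finset (Fin n)) :
    Aalg k x F (l ++ [S]) = pick k x F (runA k x F l) S := by
  rw [Aalg, List.dropLast_concat, List.getLastD_concat]

lemma binUnion_runA (k : ℕ) (x : ℝ) (F : ℕ) (l : List (Finset (Fin n))) :
    ∀ b, binUnion (Aalg k x F) l b = (runA k x F l).2 b := by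
  induction l using List.reverseRecOn with
  | nil => intro b; rw [binUnion_nil]; rfl
  | append_singleton l S ih =>
    intro b
    rw [binUnion_concat, runA_concat, Aalg_concat, ih]
    show _ = if b = pick k x F (runA k x F l) S then (runA k x F l).2 b ∪ S else (runA k x F l).2 b
    by_cases hb : pick k x F (runA k x F l) S = b
    · rw [if_pos hb, if_pos hb.symm, Finset.union_comm]
    · rw [if_neg hb, if_neg (Ne.symm hb), Finset.empty_union]

lemma seen_foldl (k : ℕ) (x : ℝ) (F : ℕ) (l : List (Finset (Fin n))) :
    ∀ (σ : StA n) (i : Fin n), (l.foldl (stepA k x F) σ).1 i = σ.1 i + freqL l i := by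
  induction l with
  | nil => intro σ i; simp [freqL]
  | cons s l ih =>
    intro σ i
    rw [List.foldl_cons, ih, freqL_cons]
    show σ.1 i + (if i ∈ s then 1 else 0) + freqL l i = _
    omega

lemma seen_runA (k : ℕ) (x : ℝ) (F : ℕ) (l : List (Finset (Fin n))) (i : Fin n) :
    (runA k x F l).1 i = freqL l i := by
  rw [runA, seen_foldl]
  simp

lemma phi_foldl (k : ℕ) (hk : 2 ≤ k) (F : ℕ) (l : List (Finset (Fin n))) :
    ∀ σ : StA n, Phi k (1 - 1/(k:ℝ)) F (l.foldl (stepA k (1 - 1/(k:ℝ)) F) σ)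
      ≤ Phi k (1 - 1/(k:ℝ)) F σ := by
  induction l with
  | nil => intro σ; exact le_rfl
  | cons s l ih =>
    intro σ
    rw [List.foldl_cons]
    exact le_trans (ih _) (phi_step k hk F σ s)

/-- The main counting argument for the potential-based algorithm. -/
lemma main_count (k F : ℕ) (hn : 0 < n) (hk : 2 ≤ k) (S : List (Finset (Fin n)))
    (hfreq : ∀ i, F ≤ freqL S i)
    (hxF : ((1:ℝ) - 1/(k:ℝ))^F ≤ 1/(2*n)) :
    (k:ℝ)/2 ≤ (TonlineU (Aalg k (1 - 1/(k:ℝ)) F) S : ℝ) := by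
  set x := 1 - 1/(k:ℝ) with hxdef
  have hk0 : (0:ℝ) < k := by exact_mod_cast Nat.lt_of_lt_of_le (by norm_num) hk
  have hk1 : 1/(k:ℝ) ≤ 1 := by
    rw [div_le_one hk0]; exact_mod_cast Nat.le_of_lt (Nat.lt_of_lt_of_le (by norm_num) hk)
  have hx0 : 0 ≤ x := by simp only [hxdef]; linarith
  have hvnn : ∀ s, 0 ≤ vv x F s := fun s => pow_nonneg hx0 _
  set σ := runA k x F S with hσ
  -- Phi bound
  have hPhi0 : Phi k x F (⟨fun _ => 0, fun _ => ∅⟩ : StA n) = (k:ℝ) * n * x^F := by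
    rw [Phi]
    have : ∀ b ∈ Finset.range k,
        (∑ i ∈ Finset.univ \ (∅ : Finset (Fin n)), vv x F 0) = (n:ℝ) * x^F := by
      intro b _
      rw [Finset.sdiff_empty, Finset.sum_const, Finset.card_univ, Fintype.card_fin]
      rw [vv, Nat.sub_zero, nsmul_eq_mul]
    rw [Finset.sum_congr rfl this, Finset.sum_const, Finset.card_range, nsmul_eq_mul]
    ring
  have hPhirun : Phi k x F σ ≤ (k:ℝ) * n * x^F := by
    rw [hσ, runA, ← hPhi0]
    exact phi_foldl k hk F S _
  -- full bins
  set Full := (Finset.range k).filter (fun b => σ.2 b = Finset.univ) with hFull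
  have hsplit : Full.card
      + ((Finset.range k).filter (fun b => ¬ σ.2 b = Finset.univ)).card = k := by
    rw [hFull, Finset.card_filter_add_card_filter_not, Finset.card_range]
  have hnonfull : (((Finset.range k).filter (fun b => ¬ σ.2 b = Finset.univ)).card : ℝ)
      ≤ Phi k x F σ := by
    rw [Phi]
    calc (((Finset.range k).filter (fun b => ¬ σ.2 b = Finset.univ)).card : ℝ)
        = ∑ _b ∈ (Finset.range k).filter (fun b => ¬ σ.2 b = Finset.univ), (1:ℝ) := by
          rw [Finset.sum_const, nsmul_eq_mul, mul_one]
      _ ≤ ∑ b ∈ (Finset.range k).filter (fun b => ¬ σ.2 b = Finset.univ),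
            ∑ i ∈ Finset.univ \ σ.2 b, vv x F (σ.1 i) := by
          apply Finset.sum_le_sum
          intro b hb
          have hne : (Finset.univ \ σ.2 b).Nonempty := by
            rw [Finset.sdiff_nonempty]
            intro hsub
            exact (Finset.mem_filter.1 hb).2 (Finset.univ_subset_iff.1 hsub)
          obtain ⟨i, hi⟩ := hne
          have h1 : vv x F (σ.1 i) = 1 := by
            rw [hσ, seen_runA, vv, Nat.sub_eq_zero_of_le (hfreq i), pow_zero]
          calc (1:ℝ) = vv x F (σ.1 i) := h1.symm
            _ ≤ ∑ i ∈ Finset.univ \ σ.2 b, vv x F (σ.1 i) :=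
                Finset.single_le_sum (fun j _ => hvnn _) hi
      _ ≤ ∑ b ∈ Finset.range k, ∑ i ∈ Finset.univ \ σ.2 b, vv x F (σ.1 i) := by
          apply Finset.sum_le_sum_of_subset_of_nonneg (Finset.filter_subset _ _)
          intro b _ _
          exact Finset.sum_nonneg fun i _ => hvnn _
  -- Full ⊆ the Tonline filter set
  have hsubset : Full ⊆ (((Finset.range S.length).image fun j => Aalg k x F (S.take (j + 1))).filter
      fun b => binUnion (Aalg k x F) S b = Finset.univ) := by
    intro b hb
    obtain ⟨-, hbfull⟩ := Finset.mem_filter.1 hb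
    have hbin : binUnion (Aalg k x F) S b = Finset.univ := by
      rw [binUnion_runA]; exact hbfull
    apply Finset.mem_filter.2
    refine ⟨?_, hbin⟩
    have h0 : (⟨0, hn⟩ : Fin n) ∈ binUnion (Aalg k x F) S b := by
      rw [hbin]; exact Finset.mem_univ _
    rw [binUnion] at h0
    obtain ⟨j, hj, hmem⟩ := Finset.mem_sup.1 h0
    have hcond : Aalg k x F (S.take (j + 1)) = b := by
      by_contra hne
      rw [if_neg hne] at hmem
      exact absurd hmem (Finset.notMem_empty _)
    exact Finset.mem_image.2 ⟨j, hj, hcond⟩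
  have hcard : Full.card ≤ TonlineU (Aalg k x F) S := by
    rw [TonlineU]
    exact Finset.card_le_card hsubset
  -- combine
  have hFull_le : Full.card ≤ k := by
    calc Full.card ≤ (Finset.range k).card := Finset.card_le_card (Finset.filter_subset _ _)
      _ = k := Finset.card_range k
  have hkn : (k:ℝ) * n * x^F ≤ (k:ℝ)/2 := by
    have hn0 : (0:ℝ) < n := by exact_mod_cast hn
    calc (k:ℝ) * n * x^F ≤ (k:ℝ) * n * (1/(2*n)) := by
          apply mul_le_mul_of_nonneg_left hxF (by positivity)
      _ = (k:ℝ)/2 := by field_simp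
  have hreal : (k:ℝ) - Full.card ≤ (k:ℝ)/2 := by
    have h1 : (((Finset.range k).filter (fun b => ¬ σ.2 b = Finset.univ)).card : ℝ)
        = (k:ℝ) - Full.card := by
      have : ((Finset.range k).filter (fun b => ¬ σ.2 b = Finset.univ)).card
          = k - Full.card := by omega
      rw [this, Nat.cast_sub hFull_le]
    linarith [le_trans hnonfull hPhirun, hkn, h1.symm.le, h1.le]
  have : (k:ℝ)/2 ≤ (Full.card : ℝ) := by linarith
  calc (k:ℝ)/2 ≤ (Full.card : ℝ) := this
    _ ≤ _ := by exact_mod_cast hcard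

end Main

set_option maxHeartbeats 2000000

/-- (An `O(ln n)`-competitive online algorithm exists) There is a constant `C > 0`
such that for every `n ≥ 2` there is a deterministic online algorithm `A` (given
`F_min` in advance) with: for every nonempty arrival sequence `S` of subsets of
`Fin n` whose union is `Fin n`, `T(A(F_min S), S) ≥ 1` and
`T_opt(S) ≤ C * ln n * T(A(F_min S), S)`. -/
theorem stmt6 : ∃ C : ℝ, 0 < C ∧ ∀ n : ℕ, 2 ≤ n →
    ∃ A : ℕ → List (Finset (Fin n)) → ℕ,
      ∀ S : List (Finset (Fin n)), S ≠ [] →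
        (∀ u : Fin n, ∃ s ∈ S, u ∈ s) →
        1 ≤ TonlineU (A (FminL S)) S ∧
        (ToptL S : ℝ) ≤ C * Real.log n * (TonlineU (A (FminL S)) S : ℝ) := by
  refine ⟨20, by norm_num, ?_⟩
  intro n hn
  set Ln : ℕ := ⌈Real.log (2*(n:ℝ))⌉₊ with hLn
  refine ⟨fun F => if 2 ≤ F / Ln then Aalg (F/Ln) (1 - 1/((F/Ln : ℕ):ℝ)) F else fun _ => 0, ?_⟩
  intro S hS hcov
  set F := FminL S with hF
  -- shared real facts
  have hn0 : 0 < n := by omega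
  have hnR : (2:ℝ) ≤ (n:ℝ) := by exact_mod_cast hn
  have hlogn_pos : 0 < Real.log n := Real.log_pos (by linarith)
  have hlog2_le : Real.log 2 ≤ Real.log n := Real.log_le_log (by norm_num) hnR
  have hl2lb : (0.6931471803:ℝ) < Real.log 2 := Real.log_two_gt_d9
  have hl2ub : Real.log 2 < 0.6931471808 := Real.log_two_lt_d9
  have h2n : Real.log (2*(n:ℝ)) = Real.log 2 + Real.log n :=
    Real.log_mul (by norm_num) (by positivity)
  have h2npos : 0 < Real.log (2*(n:ℝ)) := by rw [h2n]; linarith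
  have hLnlb : Real.log (2*(n:ℝ)) ≤ (Ln:ℝ) := Nat.le_ceil _
  have hLnub : (Ln:ℝ) < Real.log (2*(n:ℝ)) + 1 := Nat.ceil_lt_add_one h2npos.le
  have hLpos : 0 < Ln := Nat.ceil_pos.2 h2npos
  have hLnR : (Ln:ℝ) ≤ 3.46 * Real.log n := by
    rw [h2n] at hLnub
    nlinarith [hlog2_le, hlogn_pos]
  have hfreq : ∀ i, F ≤ freqL S i := fun i => Nat.sInf_le ⟨i, rfl⟩
  have hTopt : (ToptL S : ℝ) ≤ (F:ℝ) := by
    exact_mod_cast toptL_le_fmin hn0 S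
  by_cases hc : 2 ≤ F / Ln
  · -- potential-based algorithm branch
    set k := F / Ln with hk
    have hA : (fun F => if 2 ≤ F / Ln then Aalg (F/Ln) (1 - 1/((F/Ln : ℕ):ℝ)) F
        else fun (_ : List (Finset (Fin n))) => 0) F = Aalg k (1 - 1/(k:ℝ)) F := by
      exact if_pos hc
    rw [hA]
    have hk0R : (0:ℝ) < k := by
      have : (0:ℕ) < k := by omega
      exact_mod_cast this
    have hk2R : (2:ℝ) ≤ k := by exact_mod_cast hc
    have hx0 : (0:ℝ) ≤ 1 - 1/(k:ℝ) := by
      have : 1/(k:ℝ) ≤ 1/2 := by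
        apply div_le_div_of_nonneg_left (by norm_num) (by norm_num) hk2R
      linarith
    have hkL : k * Ln ≤ F := Nat.div_mul_le_self F Ln
    have hFub : F < (k+1) * Ln := by
      have h1 := Nat.div_add_mod F Ln
      have h2 : F % Ln < Ln := Nat.mod_lt _ hLpos
      calc F = Ln * k + F % Ln := h1.symm
        _ < Ln * k + Ln := by omega
        _ = (k+1) * Ln := by ring
    -- x^F ≤ 1/(2n)
    have hxF : ((1:ℝ) - 1/(k:ℝ))^F ≤ 1/(2*(n:ℝ)) := by
      have hxe : (1:ℝ) - 1/(k:ℝ) ≤ Real.exp (-(1/(k:ℝ))) := by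
        have := Real.add_one_le_exp (-(1/(k:ℝ)))
        linarith
      have hp : ((1:ℝ) - 1/(k:ℝ))^F ≤ Real.exp (-(1/(k:ℝ)))^F :=
        pow_le_pow_left₀ hx0 hxe F
      have hexp : Real.exp (-(1/(k:ℝ)))^F = Real.exp ((F:ℝ) * (-(1/(k:ℝ)))) :=
        (Real.exp_nat_mul _ F).symm
      have hdiv : Real.log (2*(n:ℝ)) ≤ (F:ℝ)/(k:ℝ) := by
        rw [le_div_iff₀ hk0R]
        have hcast : ((k * Ln : ℕ):ℝ) ≤ (F:ℝ) := by exact_mod_cast hkL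
        push_cast at hcast
        nlinarith [hLnlb]
      have hexp2 : Real.exp ((F:ℝ) * (-(1/(k:ℝ)))) ≤ Real.exp (-(Real.log (2*(n:ℝ)))) := by
        apply Real.exp_le_exp.2
        have : (F:ℝ) * (-(1/(k:ℝ))) = -((F:ℝ)/(k:ℝ)) := by ring
        rw [this]
        linarith
      have hexp3 : Real.exp (-(Real.log (2*(n:ℝ)))) = 1/(2*(n:ℝ)) := by
        rw [Real.exp_neg, Real.exp_log (by positivity)]
        rw [one_div]
      calc ((1:ℝ) - 1/(k:ℝ))^F ≤ Real.exp (-(1/(k:ℝ)))^F := hp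
        _ = Real.exp ((F:ℝ) * (-(1/(k:ℝ)))) := hexp
        _ ≤ Real.exp (-(Real.log (2*(n:ℝ)))) := hexp2
        _ = 1/(2*(n:ℝ)) := hexp3
    have hT : (k:ℝ)/2 ≤ (TonlineU (Aalg k (1 - 1/(k:ℝ)) F) S : ℝ) :=
      main_count k F hn0 hc S hfreq hxF
    have hT1 : (1:ℝ) ≤ (TonlineU (Aalg k (1 - 1/(k:ℝ)) F) S : ℝ) := by linarith
    constructor
    · exact_mod_cast hT1
    · set T := (TonlineU (Aalg k (1 - 1/(k:ℝ)) F) S : ℝ) with hTdef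
      have hFubR : (F:ℝ) ≤ ((k:ℝ)+1) * (Ln:ℝ) := by
        have : (F:ℝ) < (((k+1) * Ln : ℕ):ℝ) := by exact_mod_cast hFub
        push_cast at this
        linarith
      have hkT : (k:ℝ) ≤ 2*T := by linarith
      have e1 : ((k:ℝ)+1) * (Ln:ℝ) ≤ ((3/2)*(k:ℝ)) * (3.46 * Real.log n) := by
        apply mul_le_mul (by linarith) hLnR (by positivity) (by linarith)
      have e2 : ((3/2)*(k:ℝ)) * (3.46 * Real.log n) ≤ 20 * Real.log n * T := by
        nlinarith [hlogn_pos, hkT, hT1]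
      linarith
  · -- trivial algorithm branch
    have hA : (fun F => if 2 ≤ F / Ln then Aalg (F/Ln) (1 - 1/((F/Ln : ℕ):ℝ)) F
        else fun (_ : List (Finset (Fin n))) => 0) F
        = (fun (_ : List (Finset (Fin n))) => 0) := by
      simp only [if_neg hc]
    rw [hA]
    have hFub : F < 2 * Ln := by
      have : F / Ln < 2 := by omega
      exact (Nat.div_lt_iff_lt_mul hLpos).1 this
    have hbin : binUnion (fun (_ : List (Finset (Fin n))) => 0) S 0 = Finset.univ := by
      rw [binUnion]
      rw [← sup_getD_univ S hcov]
      apply Finset.sup_congr rfl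
      intro j _
      rw [if_pos rfl]
    have hlen : 0 < S.length := List.length_pos_iff.2 hS
    have hmem : (0:ℕ) ∈ (((Finset.range S.length).image
        fun j => (fun (_ : List (Finset (Fin n))) => 0) (S.take (j + 1))).filter
        fun b => binUnion (fun (_ : List (Finset (Fin n))) => 0) S b = Finset.univ) := by
      apply Finset.mem_filter.2
      refine ⟨Finset.mem_image.2 ⟨0, Finset.mem_range.2 hlen, rfl⟩, hbin⟩
    have hT1 : 1 ≤ TonlineU (fun (_ : List (Finset (Fin n))) => 0) S := by
      rw [TonlineU]
      exact Finset.card_pos.2 ⟨0, hmem⟩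
    refine ⟨hT1, ?_⟩
    set T : ℝ := (TonlineU (fun (_ : List (Finset (Fin n))) => 0) S : ℝ) with hTdef
    have hT1R : (1:ℝ) ≤ T := by rw [hTdef]; exact_mod_cast hT1
    have hFR : (F:ℝ) < 2*(Ln:ℝ) := by exact_mod_cast hFub
    have h1 : (ToptL S : ℝ) ≤ 2*(Ln:ℝ) := by linarith
    have h2 : 2*(Ln:ℝ) ≤ 6.92 * Real.log n := by linarith
    have h3 : (20*Real.log n) * 1 ≤ (20*Real.log n) * T :=
      mul_le_mul_of_nonneg_left hT1R (by linarith)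
    calc (ToptL S : ℝ) ≤ 2*(Ln:ℝ) := h1
      _ ≤ 20 * Real.log n := by linarith
      _ = (20 * Real.log n) * 1 := by ring
      _ ≤ (20 * Real.log n) * T := h3
      _ = 20 * Real.log n * T := by ring
end

section
/- (Theorem: F_min lower bound without knowledge of F_min) For every n >= 3 and every m >= 2n - 2, and every deterministic online algorithm A : List (Finset (Fin n)) -> ℕ, there exist two finite sequences S1 and S2 of subsets of Fin n, both of length m, such that T_opt(S1) >= 1, T_opt(S2) >= n - 1, F_min(S2) = n - 1, and at least one of the following holds: T(A, S1) = 0, or T(A, S2) <= 1. In particular, any online algorithm that is given only the universe U and the number of subsets |S| in advance has competitive ratio at least F_min. -/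
lemma countP_range_aux (p : ℕ → Bool) (k : ℕ) :
    (List.range k).countP p = ((Finset.range k).filter (fun j => p j)).card := by
  induction k with
  | zero => simp
  | succ k ih =>
    rw [List.range_succ, List.countP_append, ih, Finset.range_add_one,
      Finset.filter_insert]
    by_cases hp : p k
    · rw [if_pos hp, Finset.card_insert_of_notMem (by simp)]
      simp [hp, List.countP_cons]
    · rw [if_neg hp]
      simp [hp, List.countP_cons]

lemma bddTopt_aux {n : ℕ} (hn : 0 < n) (S : List (Finset (Fin n))) :
    BddAbove {k | ∃ C : Fin k → Finset (Fin S.length),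
      (∀ a b, a ≠ b → Disjoint (C a) (C b)) ∧
      ∀ a, ∀ u : Fin n, ∃ j ∈ C a, u ∈ S.get j} := by
  refine ⟨S.length, ?_⟩
  rintro t ⟨C, hdisj, hcov⟩
  choose f hf _ using fun a => hcov a ⟨0, hn⟩
  have hinj : Function.Injective f := by
    intro a b hab
    by_contra hne
    exact Finset.disjoint_left.mp (hdisj a b hne) (hf a) (hab ▸ hf b)
  simpa using Fintype.card_le_of_injective f hinj

/-- (`F_min` lower bound without knowledge of `F_min`) For every `n ≥ 3`, every
`m ≥ 2n - 2` and every deterministic online algorithm `A`, there are two arrival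
sequences `S1`, `S2` of subsets of `Fin n`, both of length `m`, with
`T_opt(S1) ≥ 1`, `T_opt(S2) ≥ n - 1`, `F_min(S2) = n - 1`, and either
`T(A, S1) = 0` or `T(A, S2) ≤ 1`; hence any online algorithm given only the
universe and the number of subsets in advance has competitive ratio at least
`F_min`. -/
theorem stmt8 (n m : ℕ) (hn : 3 ≤ n) (hm : 2 * n - 2 ≤ m)
    (A : List (Finset (Fin n)) → ℕ) :
    ∃ S1 S2 : List (Finset (Fin n)),
      S1.length = m ∧ S2.length = m ∧
      1 ≤ ToptL S1 ∧ n - 1 ≤ ToptL S2 ∧ FminL S2 = n - 1 ∧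
      (TonlineU A S1 = 0 ∨ TonlineU A S2 ≤ 1) := by
  set k := n - 1 with hk
  have hkm : k ≤ m := by omega
  have h2k : 2 * k ≤ m := by omega
  have hkn : k < n := by omega
  have hk2 : 2 ≤ k := by omega
  set z : Fin n := ⟨n - 1, by omega⟩ with hz
  set e : ℕ → Fin n := fun j => ⟨j % n, Nat.mod_lt _ (by omega)⟩ with he
  set X : List (Finset (Fin n)) :=
    (List.range k).map (fun j => ({e j, z} : Finset (Fin n))) with hX
  set Y : List (Finset (Fin n)) :=
    (List.range k).map (fun j => (Finset.univ \ {e j, z} : Finset (Fin n))) with hY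
  have lenX : X.length = k := by simp [hX]
  have lenY : Y.length = k := by simp [hY]
  set S1 : List (Finset (Fin n)) := X ++ List.replicate (m - k) ∅ with hS1
  set S2 : List (Finset (Fin n)) := X ++ Y ++ List.replicate (m - 2 * k) ∅ with hS2
  have lenS1 : S1.length = m := by simp [hS1, lenX]; omega
  have lenS2 : S2.length = m := by simp [hS2, lenX, lenY]; omega
  -- getD facts
  have hS1get : ∀ j < m, S1.getD j ∅ =
      if j < k then ({e j, z} : Finset (Fin n)) else ∅ := by
    intro j hj
    rw [hS1, List.getD_eq_getElem _ _ (by simp [lenX]; omega)]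
    by_cases h : j < k
    · rw [if_pos h, List.getElem_append_left (by omega)]
      simp [hX]
    · rw [if_neg h, List.getElem_append_right (by omega)]
      simp
  have hS2get : ∀ j < m, S2.getD j ∅ =
      if j < k then ({e j, z} : Finset (Fin n))
      else if j < 2 * k then (Finset.univ \ {e (j - k), z} : Finset (Fin n))
      else ∅ := by
    intro j hj
    rw [hS2, List.getD_eq_getElem _ _ (by simp [lenX, lenY]; omega)]
    by_cases h1 : j < k
    · rw [if_pos h1, List.getElem_append_left (by simp [lenX, lenY]; omega),
        List.getElem_append_left (by omega)]
      simp [hX]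
    · rw [if_neg h1]
      by_cases h2 : j < 2 * k
      · rw [if_pos h2, List.getElem_append_left (by simp [lenX, lenY]; omega),
          List.getElem_append_right (by omega)]
        simp [hY, lenX]
      · rw [if_neg h2, List.getElem_append_right (by simp [lenX, lenY]; omega)]
        simp
  have hez : ∀ j < k, e j ≠ z := by
    intro j hj hcon
    have : j % n = n - 1 := congrArg Fin.val hcon
    rw [Nat.mod_eq_of_lt (by omega)] at this
    omega
  have heinj : ∀ j1 < k, ∀ j2 < k, e j1 = e j2 → j1 = j2 := by
    intro j1 h1 j2 h2 hcon
    have : j1 % n = j2 % n := congrArg Fin.val hcon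
    rwa [Nat.mod_eq_of_lt (by omega), Nat.mod_eq_of_lt (by omega)] at this
  refine ⟨S1, S2, lenS1, lenS2, ?_, ?_, ?_, ?_⟩
  · -- 1 ≤ ToptL S1
    apply le_csSup (show BddAbove _ from bddTopt_aux (by omega) S1)
    refine ⟨fun _ => Finset.univ, fun a b hab => absurd (Subsingleton.elim a b) hab, ?_⟩
    intro a u
    by_cases hu : u = z
    · refine ⟨⟨0, by omega⟩, Finset.mem_univ _, ?_⟩
      rw [List.get_eq_getElem, ← List.getD_eq_getElem _ ∅, hS1get 0 (by omega),
        if_pos (by omega)]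
      simp [hu]
    · have hul : u.val < k := by
        have h1 := u.isLt
        have : u.val ≠ n - 1 := fun hcon => hu (Fin.ext (by simp [hz, hcon]))
        omega
      refine ⟨⟨u.val, by omega⟩, Finset.mem_univ _, ?_⟩
      rw [List.get_eq_getElem, ← List.getD_eq_getElem _ ∅, hS1get u.val (by omega),
        if_pos hul]
      have : e u.val = u := Fin.ext (Nat.mod_eq_of_lt u.isLt)
      simp [this]
  · -- n - 1 ≤ ToptL S2
    apply le_csSup (show BddAbove _ from bddTopt_aux (by omega) S2)
    refine ⟨fun a => ({⟨a.val, by rw [lenS2]; omega⟩,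
      ⟨k + a.val, by rw [lenS2]; have := a.isLt; omega⟩} : Finset (Fin S2.length)), ?_, ?_⟩
    · intro a b hab
      have hav := a.isLt
      have hbv := b.isLt
      have hne : a.val ≠ b.val := fun h => hab (Fin.ext h)
      rw [Finset.disjoint_left]
      intro x hx hx'
      simp only [Finset.mem_insert, Finset.mem_singleton] at hx hx'
      rcases hx with h | h <;> rcases hx' with h' | h' <;>
        · have := congrArg Fin.val (h ▸ h')
          simp at this; omega
    · intro a u
      by_cases hu : u ∈ ({e a.val, z} : Finset (Fin n))
      · refine ⟨_, Finset.mem_insert_self _ _, ?_⟩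
        rw [List.get_eq_getElem, ← List.getD_eq_getElem _ ∅]
        simp only
        rw [hS2get a.val (by have := a.isLt; omega), if_pos a.isLt]
        exact hu
      · refine ⟨_, Finset.mem_insert_of_mem (Finset.mem_singleton_self _), ?_⟩
        rw [List.get_eq_getElem, ← List.getD_eq_getElem _ ∅]
        simp only
        rw [hS2get (k + a.val) (by have := a.isLt; omega), if_neg (by omega),
          if_pos (by have := a.isLt; omega)]
        rw [Nat.add_sub_cancel_left]
        exact Finset.mem_sdiff.mpr ⟨Finset.mem_univ _, hu⟩
  · -- FminL S2 = n - 1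
    have hall : ∀ i : Fin n, freqL S2 i = k := by
      intro i
      rw [freqL, hS2, List.countP_append, List.countP_append]
      have hpad : (List.replicate (m - 2 * k) (∅ : Finset (Fin n))).countP
          (fun s => decide (i ∈ s)) = 0 := by
        rw [List.countP_eq_zero]
        intro a ha
        rw [List.eq_of_mem_replicate ha]
        simp
      rw [hpad, hX, hY, List.countP_map, List.countP_map]
      rw [show ((fun s => decide (i ∈ s)) ∘ fun j => ({e j, z} : Finset (Fin n)))
        = fun j => decide (i ∈ ({e j, z} : Finset (Fin n))) from rfl]
      rw [show ((fun s => decide (i ∈ s)) ∘ fun j =>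
          (Finset.univ \ {e j, z} : Finset (Fin n)))
        = fun j => decide (i ∈ (Finset.univ \ {e j, z} : Finset (Fin n))) from rfl]
      rw [countP_range_aux, countP_range_aux]
      by_cases hi : i = z
      · have h1 : ((Finset.range k).filter
            (fun j => decide (i ∈ ({e j, z} : Finset (Fin n))) = true)) = Finset.range k := by
          apply Finset.filter_true_of_mem
          intro j _; simp [hi]
        have h2 : ((Finset.range k).filter
            (fun j => decide (i ∈ (Finset.univ \ {e j, z} : Finset (Fin n))) = true)) = ∅ := by
          apply Finset.filter_false_of_mem
          intro j _; simp [hi]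
        rw [h1, h2]; simp
      · have hul : i.val < k := by
          have h1 := i.isLt
          have : i.val ≠ n - 1 := fun hcon => hi (Fin.ext (by simp [hz, hcon]))
          omega
        have hmem : ∀ j, j < k → (i ∈ ({e j, z} : Finset (Fin n)) ↔ j = i.val) := by
          intro j hj
          simp only [Finset.mem_insert, Finset.mem_singleton]
          constructor
          · rintro (h | h)
            · have := congrArg Fin.val h
              rw [he] at this
              simp only at this
              rw [Nat.mod_eq_of_lt (by omega)] at this
              omega
            · exact absurd h hi
          · rintro rfl
            left
            exact (Fin.ext (Nat.mod_eq_of_lt (by omega))).symm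
        have h1 : ((Finset.range k).filter
            (fun j => decide (i ∈ ({e j, z} : Finset (Fin n))) = true)) = {i.val} := by
          ext j
          simp only [Finset.mem_filter, Finset.mem_range, Finset.mem_singleton,
            decide_eq_true_eq]
          constructor
          · rintro ⟨hj, hji⟩; exact (hmem j hj).mp hji
          · rintro rfl; exact ⟨hul, (hmem _ hul).mpr rfl⟩
        have h2 : ((Finset.range k).filter
            (fun j => decide (i ∈ (Finset.univ \ {e j, z} : Finset (Fin n))) = true))
            = Finset.range k \ {i.val} := by
          ext j
          simp only [Finset.mem_filter, Finset.mem_range, Finset.mem_sdiff,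
            Finset.mem_singleton, decide_eq_true_eq, Finset.mem_univ, true_and]
          constructor
          · rintro ⟨hj, hji⟩
            exact ⟨hj, fun hcon => hji ((hmem j hj).mpr hcon)⟩
          · rintro ⟨hj, hji⟩
            exact ⟨hj, fun hcon => hji ((hmem j hj).mp hcon)⟩
        rw [h1, h2, Finset.card_sdiff_of_subset (by simp [hul])]
        simp; omega
    have hne : Nonempty (Fin n) := ⟨⟨0, by omega⟩⟩
    rw [FminL, show (fun i : Fin n => freqL S2 i) = fun _ => k from funext hall,
      Set.range_const, csInf_singleton]
  · -- the disjunction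
    have htake1 : ∀ j < k, S1.take (j + 1) = X.take (j + 1) := by
      intro j hj; rw [hS1, List.take_append_of_le_length (by omega)]
    have htake2 : ∀ j < k, S2.take (j + 1) = X.take (j + 1) := by
      intro j hj
      rw [hS2, List.take_append_of_le_length (by simp [lenX, lenY]; omega),
        List.take_append_of_le_length (by omega)]
    by_cases hA : ∀ j < k, A (X.take (j + 1)) = A (X.take 1)
    · -- all in one bin; use S2
      right
      rw [TonlineU]
      calc _ ≤ ({A (X.take 1)} : Finset ℕ).card := by
              apply Finset.card_le_card
              intro b hb
              rw [Finset.mem_filter] at hb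
              obtain ⟨_, hb⟩ := hb
              have hzmem : z ∈ binUnion A S2 b := hb ▸ Finset.mem_univ z
              rw [binUnion, Finset.mem_sup] at hzmem
              obtain ⟨j, hj, hjz⟩ := hzmem
              rw [Finset.mem_range, lenS2] at hj
              by_cases hcond : A (S2.take (j + 1)) = b
              · rw [if_pos hcond, hS2get j hj] at hjz
                by_cases h1 : j < k
                · rw [if_pos h1] at hjz
                  rw [Finset.mem_singleton, ← hcond, htake2 j h1, hA j h1]
                · exfalso
                  rw [if_neg h1] at hjz
                  by_cases h2 : j < 2 * k
                  · rw [if_pos h2] at hjz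
                    exact (Finset.mem_sdiff.mp hjz).2 (by simp)
                  · rw [if_neg h2] at hjz; simp at hjz
              · rw [if_neg hcond] at hjz; simp at hjz
            _ = 1 := Finset.card_singleton _
    · -- split; use S1
      left
      push_neg at hA
      obtain ⟨j1, hj1, hj1ne⟩ := hA
      rw [TonlineU, Finset.card_eq_zero, Finset.filter_eq_empty_iff]
      intro b _
      have hx : ∃ j0, j0 < k ∧ A (X.take (j0 + 1)) ≠ b := by
        by_cases hb : A (X.take 1) = b
        · exact ⟨j1, hj1, fun h => hj1ne (h.trans hb.symm)⟩
        · exact ⟨0, by omega, by simpa using hb⟩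
      obtain ⟨j0, hj0, hj0ne⟩ := hx
      intro hcon
      have hmem0 : e j0 ∈ binUnion A S1 b := hcon ▸ Finset.mem_univ _
      rw [binUnion, Finset.mem_sup] at hmem0
      obtain ⟨j, hj, hjz⟩ := hmem0
      rw [Finset.mem_range, lenS1] at hj
      by_cases hcond : A (S1.take (j + 1)) = b
      · rw [if_pos hcond, hS1get j hj] at hjz
        by_cases h1 : j < k
        · rw [if_pos h1] at hjz
          simp only [Finset.mem_insert, Finset.mem_singleton] at hjz
          rcases hjz with h | h
          · have hje := heinj j0 hj0 j h1 h
            rw [← hje, htake1 j0 hj0] at hcond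
            exact hj0ne hcond
          · exact hez j0 hj0 h
        · rw [if_neg h1] at hjz; simp at hjz
      · rw [if_neg hcond] at hjz; simp at hjz
end

section
/- (Cross-block pairing) Let X be a finite set with |X| = q >= 2, partitioned into blocks each of size at most ceil(q/2). Then there exist floor(q/2) pairwise disjoint unordered pairs of elements of X such that the two elements of each pair lie in distinct blocks of the partition. -/
/-- (Cross-block pairing) Let `X` be a finite set with `|X| = q ≥ 2`, partitioned
into blocks each of size at most `⌈q/2⌉`.  Then there exist `⌊q/2⌋` pairwise
disjoint unordered pairs (two-element subsets) of `X` such that the two elements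
of each pair lie in distinct blocks of the partition. -/
theorem stmt10 {X : Type*} [Fintype X] [DecidableEq X] (q : ℕ) (hq : 2 ≤ q)
    (hcard : Fintype.card X = q)
    (P : Finpartition (Finset.univ : Finset X))
    (hsize : ∀ B ∈ P.parts, B.card ≤ (q + 1) / 2) :
    ∃ pairs : Finset (Finset X),
      pairs.card = q / 2 ∧
      (∀ p ∈ pairs, p.card = 2) ∧
      (∀ p ∈ pairs, ∀ p' ∈ pairs, p ≠ p' → Disjoint p p') ∧
      (∀ p ∈ pairs, ∃ x ∈ p, ∃ y ∈ p, ∃ Bx ∈ P.parts, ∃ By ∈ P.parts,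
        x ∈ Bx ∧ y ∈ By ∧ Bx ≠ By) := by
  classical
  set c := (q + 1) / 2 with hc
  -- encode blocks into ℕ
  let encB : Finset X → ℕ := fun B => (Fintype.equivFin (Finset X) B : ℕ)
  have hencB : Function.Injective encB := fun a b h => by
    exact (Fintype.equivFin (Finset X)).injective (Fin.val_injective h)
  let idx : X → ℕ := fun x => encB (P.part x)
  have hidx : ∀ x y : X, idx x = idx y → P.part x = P.part y := fun x y h => hencB h
  -- a linear order on X sorting by block
  let key : X → ℕ ×ₗ ℕ := fun x => toLex (idx x, (Fintype.equivFin X x : ℕ))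
  have hkey : Function.Injective key := by
    intro a b h
    have h2 : ((idx a, ((Fintype.equivFin X) a : ℕ)) : ℕ × ℕ)
        = (idx b, ((Fintype.equivFin X) b : ℕ)) := congrArg ofLex h
    have := congrArg Prod.snd h2
    exact (Fintype.equivFin X).injective (Fin.val_injective this)
  letI : LinearOrder X := LinearOrder.lift' key hkey
  have hle : ∀ x y : X, x ≤ y ↔ key x ≤ key y := fun _ _ => Iff.rfl
  have hcard' : (Finset.univ : Finset X).card = q := by
    simpa using hcard
  let e : Fin q ↪o X := Finset.orderEmbOfFin Finset.univ hcard'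
  have he : Function.Injective e := e.injective
  -- idx is monotone along e
  have hmono : ∀ i j : Fin q, i ≤ j → idx (e i) ≤ idx (e j) := by
    intro i j hij
    have : e i ≤ e j := e.monotone hij
    rw [hle] at this
    rcases (Prod.Lex.le_iff).mp this with h | h
    · exact le_of_lt h
    · exact le_of_eq h.1
  -- core: if e i and e j are in the same part, the part contains the whole interval
  have hcore : ∀ i j : Fin q, i ≤ j → P.part (e i) = P.part (e j) →
      (j : ℕ) + 1 - i ≤ (P.part (e i)).card := by
    intro i j hij hpart
    have hsub : (Finset.Icc i j).image (fun k => e k) ⊆ P.part (e i) := by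
      intro x hx
      obtain ⟨k, hk, rfl⟩ := Finset.mem_image.mp hx
      rw [Finset.mem_Icc] at hk
      have h1 : idx (e i) ≤ idx (e k) := hmono i k hk.1
      have h2 : idx (e k) ≤ idx (e j) := hmono k j hk.2
      have hij' : idx (e j) = idx (e i) := congrArg encB hpart.symm
      have : idx (e k) = idx (e i) := le_antisymm (hij' ▸ h2) h1
      have hpk : P.part (e k) = P.part (e i) := hidx _ _ this
      have := P.mem_part (Finset.mem_univ (e k))
      rwa [hpk] at this
    calc (j : ℕ) + 1 - i = (Finset.Icc i j).card := (Fin.card_Icc i j).symm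
      _ = ((Finset.Icc i j).image (fun k => e k)).card :=
          (Finset.card_image_of_injective _ he).symm
      _ ≤ (P.part (e i)).card := Finset.card_le_card hsub
  -- the pairing
  have lt1 : ∀ i : Fin (q / 2), (i : ℕ) < q := fun i => by have := i.isLt; omega
  have lt2 : ∀ i : Fin (q / 2), (i : ℕ) + c < q := fun i => by have := i.isLt; omega
  let g : Fin (q / 2) → Finset X := fun i => {e ⟨i, lt1 i⟩, e ⟨(i : ℕ) + c, lt2 i⟩}
  have hgmem1 : ∀ i, e ⟨i, lt1 i⟩ ∈ g i := fun i => by simp [g]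
  have hgmem2 : ∀ i, e ⟨(i : ℕ) + c, lt2 i⟩ ∈ g i := fun i => by simp [g]
  have hne : ∀ i j : Fin (q / 2), e ⟨(i : ℕ), lt1 i⟩ ≠ e ⟨(j : ℕ) + c, lt2 j⟩ := by
    intro i j h
    have := he h
    have := Fin.val_eq_of_eq this
    simp only at this
    have hi := i.isLt
    omega
  have hginj : Function.Injective g := by
    intro i j hgij
    have h1 : e ⟨(i : ℕ), lt1 i⟩ ∈ g j := hgij ▸ hgmem1 i
    have : e ⟨(i : ℕ), lt1 i⟩ = e ⟨(j : ℕ), lt1 j⟩ := by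
      rcases Finset.mem_insert.mp h1 with h | h
      · exact h
      · exact absurd (Finset.mem_singleton.mp h) (hne i j)
    have := Fin.val_eq_of_eq (he this)
    simp only at this
    exact Fin.ext this
  refine ⟨Finset.image g Finset.univ, ?_, ?_, ?_, ?_⟩
  · rw [Finset.card_image_of_injective _ hginj, Finset.card_univ, Fintype.card_fin]
  · intro p hp
    obtain ⟨i, _, rfl⟩ := Finset.mem_image.mp hp
    rw [Finset.card_insert_of_notMem (by simpa using hne i i), Finset.card_singleton]
  · intro p hp p' hp' hne'
    obtain ⟨i, _, rfl⟩ := Finset.mem_image.mp hp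
    obtain ⟨j, _, rfl⟩ := Finset.mem_image.mp hp'
    have hij : i ≠ j := fun h => hne' (h ▸ rfl)
    have hij' : (i : ℕ) ≠ (j : ℕ) := fun h => hij (Fin.ext h)
    rw [Finset.disjoint_left]
    intro a ha hb
    have key4 : ∀ k l : Fin q, e k = e l → (k : ℕ) = l := fun k l h =>
      Fin.val_eq_of_eq (he h)
    simp only [g, Finset.mem_insert, Finset.mem_singleton] at ha hb
    have hi := i.isLt
    have hj := j.isLt
    rcases ha with rfl | rfl <;> rcases hb with h | h <;>
      · have := key4 _ _ h; simp only at this; omega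
  · intro p hp
    obtain ⟨i, _, rfl⟩ := Finset.mem_image.mp hp
    refine ⟨e ⟨i, lt1 i⟩, hgmem1 i, e ⟨(i : ℕ) + c, lt2 i⟩, hgmem2 i,
      P.part _, P.part_mem.mpr (Finset.mem_univ _), P.part _, P.part_mem.mpr (Finset.mem_univ _),
      P.mem_part (Finset.mem_univ _), P.mem_part (Finset.mem_univ _), ?_⟩
    intro hpart
    have hle' : (⟨(i : ℕ), lt1 i⟩ : Fin q) ≤ ⟨(i : ℕ) + c, lt2 i⟩ := by
      simp [Fin.le_def]
    have := hcore _ _ hle' hpart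
    have hB := hsize _ (P.part_mem.mpr (Finset.mem_univ (e ⟨(i : ℕ), lt1 i⟩)))
    simp only at this
    omega
end

section
/- (Offline bound for the adversarial instance) Let q >= 2, let U = (Fin q -> Bool), and for g in Fin q let S_g = { u in U : u(g) = true }. Let P be a partition of Fin q into blocks each of size at most ceil(q/2), and let B_P be the set of bottleneck elements of the blocks of P (the element b_B with b_B(k) = true iff k is not in B, for each block B). Consider the finite multiset family S consisting of the q subsets S_g (g in Fin q) together with floor(q/2) copies of the singleton {u} for every u in U that is not in B_P. Then T_opt(S) >= floor(q/2); that is, S contains floor(q/2) pairwise disjoint set covers of U. -/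
/-- The set of bottleneck elements of the partition `P` of `Fin q`: for each block
`B` the element `b_B : Fin q → Bool` with `b_B k = true ↔ k ∉ B`. -/
def bottlenecks (q : ℕ) (P : Finpartition (Finset.univ : Finset (Fin q))) :
    Finset (Fin q → Bool) :=
  P.parts.image fun B => fun k : Fin q => decide (k ∉ B)

/-- The adversarial family: the `q` subsets `S_g = {u | u g = true}` for
`g : Fin q`, together with `⌊q/2⌋` copies of the singleton `{u}` for every
element `u` of the universe that is not a bottleneck element of `P`. -/
def advFamily (q : ℕ) (P : Finpartition (Finset.univ : Finset (Fin q))) :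
    (Fin q ⊕ ({u : Fin q → Bool // u ∉ bottlenecks q P} × Fin (q / 2))) →
      Finset (Fin q → Bool)
  | Sum.inl g => Finset.univ.filter fun u : Fin q → Bool => u g = true
  | Sum.inr p => {p.1.1}

private lemma aux_key_mono (px py xv yv q : ℕ) (hy : yv < q)
    (h : px * q + xv ≤ py * q + yv) : px ≤ py := by
  by_contra hc
  push_neg at hc
  have : (py + 1) * q ≤ px * q := Nat.mul_le_mul_right q hc
  nlinarith

/-- (Offline bound for the adversarial instance) Let `q ≥ 2` and let `P` be a
partition of `Fin q` into blocks each of size at most `⌈q/2⌉`.  Then the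
adversarial family contains `⌊q/2⌋` pairwise disjoint set covers of the universe
`Fin q → Bool`, i.e. `T_opt ≥ ⌊q/2⌋`. -/
theorem stmt11 (q : ℕ) (hq : 2 ≤ q)
    (P : Finpartition (Finset.univ : Finset (Fin q)))
    (hsize : ∀ B ∈ P.parts, B.card ≤ (q + 1) / 2) :
    q / 2 ≤ ToptFam (advFamily q P) := by
  classical
  set m := q / 2 with hm
  have hpm : ∀ x : Fin q, x ∈ P.part x := fun x => P.mem_part (Finset.mem_univ x)
  have hPM : ∀ x : Fin q, P.part x ∈ P.parts := fun x => P.part_mem.2 (Finset.mem_univ x)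
  set pk : Fin q → Fin q := fun x => (P.part x).min' ⟨x, hpm x⟩ with hpk
  have hpk_mem : ∀ x, pk x ∈ P.part x := fun x => Finset.min'_mem _ _
  have hpk_part : ∀ x y : Fin q, pk x = pk y → P.part x = P.part y := fun x y h =>
    P.eq_of_mem_parts (hPM x) (hPM y) (hpk_mem x) (h ▸ hpk_mem y)
  have hpart_pk : ∀ x y : Fin q, P.part x = P.part y → pk x = pk y := by
    intro x y h
    simp only [hpk, h]
  set keyn : Fin q → ℕ := fun x => (pk x).val * q + x.val with hkeyn
  set r : Fin q → Fin q → Prop := fun x y => keyn x ≤ keyn y with hr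
  haveI : DecidableRel r := fun x y => by
    simp only [hr]; infer_instance
  haveI : IsTrans (Fin q) r := ⟨fun a b c => le_trans⟩
  haveI : IsTotal (Fin q) r := ⟨fun a b => le_total _ _⟩
  haveI : IsRefl (Fin q) r := ⟨fun a => le_refl _⟩
  haveI : IsAntisymm (Fin q) r := ⟨by
    intro x y hxy hyx
    have h : keyn x = keyn y := le_antisymm hxy hyx
    simp only [hkeyn] at h
    have hx := x.isLt
    have hy := y.isLt
    have h1 : ((pk x).val * q + x.val) % q = x.val := by
      rw [Nat.mul_comm, Nat.mul_add_mod, Nat.mod_eq_of_lt hx]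
    have h2 : ((pk y).val * q + y.val) % q = y.val := by
      rw [Nat.mul_comm, Nat.mul_add_mod, Nat.mod_eq_of_lt hy]
    exact Fin.ext (by rw [← h1, ← h2, h])⟩
  set L := Finset.sort Finset.univ r with hL
  have hlen : L.length = q := by
    rw [hL, Finset.length_sort, Finset.card_univ, Fintype.card_fin]
  have hnodup : L.Nodup := Finset.sort_nodup _ r
  have hsorted : List.Pairwise r L := Finset.pairwise_sort _ r
  -- key combinatorial claim: positions q-m apart lie in different parts
  have hdiff : ∀ i j : Fin L.length, (i : ℕ) + (q - m) = (j : ℕ) →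
      P.part (L.get i) ≠ P.part (L.get j) := by
    intro i j hij hcontra
    set B := P.part (L.get i) with hB
    have hIcc : Finset.Icc i j ⊆
        Finset.univ.filter (fun t : Fin L.length => L.get t ∈ B) := by
      intro t ht
      rw [Finset.mem_Icc] at ht
      have h1 : r (L.get i) (L.get t) := hsorted.rel_get_of_le ht.1
      have h2 : r (L.get t) (L.get j) := hsorted.rel_get_of_le ht.2
      simp only [hr, hkeyn] at h1 h2
      have p1 : (pk (L.get i)).val ≤ (pk (L.get t)).val :=
        aux_key_mono _ _ _ _ q (L.get t).isLt h1
      have p2 : (pk (L.get t)).val ≤ (pk (L.get j)).val :=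
        aux_key_mono _ _ _ _ q (L.get j).isLt h2
      have peq : pk (L.get i) = pk (L.get j) := hpart_pk _ _ hcontra
      have pteq : pk (L.get t) = pk (L.get i) := by
        apply Fin.ext
        rw [peq] at p1 ⊢
        omega
      have hpart : P.part (L.get t) = B := hpk_part _ _ pteq
      simp only [Finset.mem_filter, Finset.mem_univ, true_and]
      exact hpart ▸ hpm (L.get t)
    have hc1 : (q - m) + 1 ≤ (Finset.Icc i j).card := by
      rw [Fin.card_Icc]
      omega
    have hc2 : (Finset.univ.filter (fun t : Fin L.length => L.get t ∈ B)).card ≤ B.card := by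
      apply Finset.card_le_card_of_injOn L.get
      · intro t ht
        simp only [Finset.mem_coe, Finset.mem_filter] at ht
        exact ht.2
      · intro a ha b hb hab
        exact (List.Nodup.get_inj_iff hnodup).mp hab
    have hc3 : B.card ≤ (q + 1) / 2 := hsize B (hPM _)
    have hc4 := Finset.card_le_card hIcc
    omega
  -- positions
  have hmq : ∀ a : Fin m, (a : ℕ) < L.length := by
    intro a
    have := a.isLt
    omega
  have hmq2 : ∀ a : Fin m, (a : ℕ) + (q - m) < L.length := by
    intro a
    have := a.isLt
    omega
  set pos1 : Fin m → Fin L.length := fun a => ⟨a, hmq a⟩ with hpos1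
  set pos2 : Fin m → Fin L.length := fun a => ⟨(a : ℕ) + (q - m), hmq2 a⟩ with hpos2
  have hamq : ∀ a : Fin m, (a : ℕ) < q / 2 := fun a => by have := a.isLt; omega
  -- covers
  set C : Fin m → Finset (Fin q ⊕ ({u : Fin q → Bool // u ∉ bottlenecks q P} × Fin (q / 2))) :=
    fun a => {Sum.inl (L.get (pos1 a)), Sum.inl (L.get (pos2 a))} ∪
      Finset.univ.image (fun u : {u : Fin q → Bool // u ∉ bottlenecks q P} =>
        Sum.inr (u, (⟨(a : ℕ), hamq a⟩ : Fin (q / 2)))) with hC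
  have hgetinj : ∀ i j : Fin L.length, L.get i = L.get j → (i : ℕ) = (j : ℕ) := by
    intro i j h
    exact congrArg Fin.val ((List.Nodup.get_inj_iff hnodup).mp h)
  have hdisj : ∀ a b : Fin m, a ≠ b → Disjoint (C a) (C b) := by
    intro a b hab
    have hab' : (a : ℕ) ≠ (b : ℕ) := fun h => hab (Fin.ext h)
    rw [Finset.disjoint_left]
    intro j hja hjb
    simp only [hC, Finset.mem_union, Finset.mem_insert, Finset.mem_singleton,
      Finset.mem_image, Finset.mem_univ, true_and] at hja hjb
    have ham := a.isLt
    have hbm := b.isLt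
    rcases hja with (rfl | rfl) | ⟨u, rfl⟩
    · rcases hjb with (h | h) | ⟨v, h⟩
      · have := hgetinj _ _ (Sum.inl.inj h)
        simp only [hpos1] at this
        omega
      · have := hgetinj _ _ (Sum.inl.inj h)
        simp only [hpos1, hpos2] at this
        omega
      · exact absurd h (by simp)
    · rcases hjb with (h | h) | ⟨v, h⟩
      · have := hgetinj _ _ (Sum.inl.inj h)
        simp only [hpos1, hpos2] at this
        omega
      · have := hgetinj _ _ (Sum.inl.inj h)
        simp only [hpos2] at this
        omega
      · exact absurd h (by simp)
    · rcases hjb with (h | h) | ⟨v, h⟩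
      · exact absurd h (by simp)
      · exact absurd h (by simp)
      · have := congrArg Fin.val (congrArg Prod.snd (Sum.inr.inj h))
        simp only at this
        omega
  have hcov : ∀ (a : Fin m) (u : Fin q → Bool), ∃ j ∈ C a, u ∈ advFamily q P j := by
    intro a u
    by_cases hu : u ∈ bottlenecks q P
    · obtain ⟨B, hBmem, hBu⟩ := Finset.mem_image.mp hu
      have hne : P.part (L.get (pos1 a)) ≠ P.part (L.get (pos2 a)) :=
        hdiff (pos1 a) (pos2 a) (by simp [hpos1, hpos2])
      have key : ∃ g ∈ ({L.get (pos1 a), L.get (pos2 a)} : Finset (Fin q)), g ∉ B := by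
        by_cases hx : L.get (pos1 a) ∈ B
        · refine ⟨L.get (pos2 a), by simp, fun hy => hne ?_⟩
          rw [P.part_eq_of_mem hBmem hx, P.part_eq_of_mem hBmem hy]
        · exact ⟨L.get (pos1 a), by simp, hx⟩
      obtain ⟨g, hg, hgB⟩ := key
      refine ⟨Sum.inl g, ?_, ?_⟩
      · simp only [hC, Finset.mem_union, Finset.mem_insert, Finset.mem_singleton]
        left
        simpa using hg
      · show u ∈ Finset.univ.filter fun u : Fin q → Bool => u g = true
        rw [Finset.mem_filter]
        refine ⟨Finset.mem_univ _, ?_⟩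
        rw [← hBu]
        simp [hgB]
    · refine ⟨Sum.inr (⟨u, hu⟩, ⟨(a : ℕ), hamq a⟩), ?_, ?_⟩
      · simp [hC]
      · show u ∈ ({u} : Finset (Fin q → Bool))
        simp
  have hmem : m ∈ {k | ∃ C : Fin k →
      Finset (Fin q ⊕ ({u : Fin q → Bool // u ∉ bottlenecks q P} × Fin (q / 2))),
      (∀ a b, a ≠ b → Disjoint (C a) (C b)) ∧
      ∀ a, ∀ u : Fin q → Bool, ∃ j ∈ C a, u ∈ advFamily q P j} := ⟨C, hdisj, hcov⟩
  have hbdd : BddAbove {k | ∃ C : Fin k →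
      Finset (Fin q ⊕ ({u : Fin q → Bool // u ∉ bottlenecks q P} × Fin (q / 2))),
      (∀ a b, a ≠ b → Disjoint (C a) (C b)) ∧
      ∀ a, ∀ u : Fin q → Bool, ∃ j ∈ C a, u ∈ advFamily q P j} := by
    haveI : Fintype (Fin q ⊕ ({u : Fin q → Bool // u ∉ bottlenecks q P} × Fin (q / 2))) :=
      Fintype.ofFinite _
    refine ⟨Fintype.card (Fin q ⊕ ({u : Fin q → Bool // u ∉ bottlenecks q P} × Fin (q / 2))), ?_⟩
    rintro k ⟨D, hd, hc⟩
    have hf : ∀ a : Fin k, ∃ j, j ∈ D a := by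
      intro a
      obtain ⟨j, hj1, _⟩ := hc a (fun _ => true)
      exact ⟨j, hj1⟩
    choose f hf1 using hf
    have hinj : Function.Injective f := by
      intro a b h
      by_contra hab
      exact Finset.disjoint_left.mp (hd a b hab) (hf1 a) (h ▸ hf1 b)
    calc k = Fintype.card (Fin k) := (Fintype.card_fin k).symm
      _ ≤ _ := Fintype.card_le_of_injective f hinj
  exact le_csSup hbdd hmem
end

section
/- (Optimization core of the cube-root lower bound) Let q >= 1 and let D : ℕ -> ℕ be a finitely supported function with sum over l >= 1 of l * D(l) equal to q. Then the sum over l >= 1 of min(l, D(l)) is at most (3q)^(2/3). -/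
lemma cube_rpow_le {a b : ℝ} (ha : 0 ≤ a) (hb : 0 ≤ b) (h : a ^ 3 ≤ b ^ 2) :
    a ≤ b ^ ((2:ℝ)/3) := by
  have h1 : a = (a ^ (3:ℕ)) ^ ((1:ℝ)/3) := by
    rw [← Real.rpow_natCast a 3, ← Real.rpow_mul ha]
    norm_num
  have h2 : (b ^ (2:ℕ)) ^ ((1:ℝ)/3) = b ^ ((2:ℝ)/3) := by
    rw [← Real.rpow_natCast b 2, ← Real.rpow_mul hb]
    norm_num
  calc a = (a ^ (3:ℕ)) ^ ((1:ℝ)/3) := h1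
    _ ≤ (b ^ (2:ℕ)) ^ ((1:ℝ)/3) := by
        apply Real.rpow_le_rpow (by positivity) (by exact_mod_cast h) (by norm_num)
    _ = b ^ ((2:ℝ)/3) := h2

lemma key_nat (D : ℕ → ℕ) (s : Finset ℕ) (T q : ℕ)
    (hq : ∑ l ∈ s, l * D l = q) :
    2 * T * (∑ l ∈ s, min l (D l)) ≤ T * (T * (T + 1)) + 2 * q := by
  have hsplit : ∑ l ∈ s, min l (D l)
      = ∑ l ∈ s.filter (fun l => l ≤ T), min l (D l)
      + ∑ l ∈ s.filter (fun l => ¬ l ≤ T), min l (D l) :=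
    (Finset.sum_filter_add_sum_filter_not s _ _).symm
  have h1 : 2 * ∑ l ∈ s.filter (fun l => l ≤ T), min l (D l) ≤ T * (T + 1) := by
    calc 2 * ∑ l ∈ s.filter (fun l => l ≤ T), min l (D l)
        = ∑ l ∈ s.filter (fun l => l ≤ T), 2 * min l (D l) := by rw [Finset.mul_sum]
      _ ≤ ∑ l ∈ s.filter (fun l => l ≤ T), 2 * l :=
          Finset.sum_le_sum (fun i _ => by have := min_le_left i (D i); omega)
      _ ≤ ∑ l ∈ Finset.range (T + 1), 2 * l := by
          apply Finset.sum_le_sum_of_subset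
          intro x hx
          simp only [Finset.mem_filter, Finset.mem_range] at *
          omega
      _ = T * (T + 1) := by
          rw [← Finset.mul_sum, mul_comm 2, Finset.sum_range_id_mul_two]
          simp [Nat.mul_comm]
  have h2 : T * ∑ l ∈ s.filter (fun l => ¬ l ≤ T), min l (D l) ≤ q := by
    calc T * ∑ l ∈ s.filter (fun l => ¬ l ≤ T), min l (D l)
        = ∑ l ∈ s.filter (fun l => ¬ l ≤ T), T * min l (D l) := by rw [Finset.mul_sum]
      _ ≤ ∑ l ∈ s.filter (fun l => ¬ l ≤ T), l * D l := by
          apply Finset.sum_le_sum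
          intro i hi
          simp only [Finset.mem_filter] at hi
          have := min_le_right i (D i)
          calc T * min i (D i) ≤ T * D i := Nat.mul_le_mul_left T this
            _ ≤ i * D i := Nat.mul_le_mul_right _ (by omega)
      _ ≤ ∑ l ∈ s, l * D l := Finset.sum_le_sum_of_subset (Finset.filter_subset _ _)
      _ = q := hq
  calc 2 * T * (∑ l ∈ s, min l (D l))
      = T * (2 * ∑ l ∈ s.filter (fun l => l ≤ T), min l (D l))
      + 2 * (T * ∑ l ∈ s.filter (fun l => ¬ l ≤ T), min l (D l)) := by rw [hsplit]; ring
    _ ≤ T * (T * (T + 1)) + 2 * q :=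
        Nat.add_le_add (Nat.mul_le_mul_left T h1) (Nat.mul_le_mul_left 2 h2)

lemma big_case_real (T S q c : ℝ) (hT3 : 3 ≤ T) (hTle : T ≤ c) (hltT : c < T + 1)
    (hc3 : c ^ 3 = 3 * q) (hkey : 2 * T * S ≤ T * (T * (T + 1)) + 2 * q) :
    S ≤ c ^ 2 := by
  have hX : (0:ℝ) ≤ (c - T) * (3 * T^2 - (c - T)^2) := by
    apply mul_nonneg (by linarith)
    nlinarith [sq_nonneg (c - T)]
  have hY : (0:ℝ) ≤ (T - 3) * T^2 := mul_nonneg (by linarith) (sq_nonneg _)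
  have hA : c^3 - 3*T*c^2 + (3/2)*T^2*(T+1) ≤ 0 := by nlinarith [hX, hY]
  have h2q : 2 * q = (2/3) * c^3 := by linarith
  have hmul : 2 * T * S ≤ 2 * T * c^2 := by nlinarith [hkey, hA, h2q]
  exact le_of_mul_le_mul_left hmul (by linarith)

/-- (Optimization core of the cube-root lower bound) Let `q ≥ 1` and let
`D : ℕ → ℕ` be finitely supported with `∑_{l ≥ 1} l * D l = q` (the term at
`l = 0` vanishes, so the sum may be taken over all of `ℕ`).  Then
`∑_{l ≥ 1} min l (D l) ≤ (3q)^(2/3)`. -/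
theorem stmt12 (q : ℕ) (hq : 1 ≤ q) (D : ℕ → ℕ)
    (hfin : (Function.support D).Finite)
    (hsum : ∑ᶠ l : ℕ, l * D l = q) :
    ((∑ᶠ l : ℕ, min l (D l) : ℕ) : ℝ) ≤ (3 * (q : ℝ)) ^ ((2 : ℝ) / 3) := by
  classical
  set s : Finset ℕ := hfin.toFinset with hs
  have hsub1 : Function.support (fun l => min l (D l)) ⊆ (s : Set ℕ) := by
    intro l hl
    simp only [Function.mem_support] at hl
    have : D l ≠ 0 := by have := min_le_right l (D l); omega
    simpa [hs, Set.Finite.mem_toFinset] using this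
  have hsub2 : Function.support (fun l => l * D l) ⊆ (s : Set ℕ) := by
    intro l hl
    simp only [Function.mem_support] at hl
    have : D l ≠ 0 := by intro h0; simp [h0] at hl
    simpa [hs, Set.Finite.mem_toFinset] using this
  have hS : ∑ᶠ l : ℕ, min l (D l) = ∑ l ∈ s, min l (D l) :=
    finsum_eq_finset_sum_of_support_subset _ hsub1
  have hq' : ∑ l ∈ s, l * D l = q := by
    rw [← finsum_eq_finset_sum_of_support_subset _ hsub2, hsum]
  set S : ℕ := ∑ l ∈ s, min l (D l) with hSdef
  rw [hS]
  have key : ∀ T : ℕ, 2 * T * S ≤ T * (T * (T + 1)) + 2 * q := fun T => key_nat D s T q hq'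
  have hb : (0:ℝ) ≤ 3 * q := by positivity
  rcases le_or_gt q 8 with hsmall | hbig
  · -- small cases: use T = 1 (q ≤ 5) or T = 2 (q ≤ 8)
    interval_cases q
    · have h1 := key 1
      apply cube_rpow_le (by positivity) hb
      have hSk : (S:ℝ) ≤ 2 := by exact_mod_cast (by omega : S ≤ 2)
      have h3 := pow_le_pow_left₀ (Nat.cast_nonneg S) hSk 3
      push_cast
      nlinarith [h3]
    · have h1 := key 1
      apply cube_rpow_le (by positivity) hb
      have hSk : (S:ℝ) ≤ 3 := by exact_mod_cast (by omega : S ≤ 3)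
      have h3 := pow_le_pow_left₀ (Nat.cast_nonneg S) hSk 3
      push_cast
      nlinarith [h3]
    · have h1 := key 1
      apply cube_rpow_le (by positivity) hb
      have hSk : (S:ℝ) ≤ 4 := by exact_mod_cast (by omega : S ≤ 4)
      have h3 := pow_le_pow_left₀ (Nat.cast_nonneg S) hSk 3
      push_cast
      nlinarith [h3]
    · have h1 := key 1
      apply cube_rpow_le (by positivity) hb
      have hSk : (S:ℝ) ≤ 5 := by exact_mod_cast (by omega : S ≤ 5)
      have h3 := pow_le_pow_left₀ (Nat.cast_nonneg S) hSk 3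
      push_cast
      nlinarith [h3]
    · have h1 := key 1
      apply cube_rpow_le (by positivity) hb
      have hSk : (S:ℝ) ≤ 6 := by exact_mod_cast (by omega : S ≤ 6)
      have h3 := pow_le_pow_left₀ (Nat.cast_nonneg S) hSk 3
      push_cast
      nlinarith [h3]
    · have h1 := key 2
      apply cube_rpow_le (by positivity) hb
      have hSk : (S:ℝ) ≤ 6 := by exact_mod_cast (by omega : S ≤ 6)
      have h3 := pow_le_pow_left₀ (Nat.cast_nonneg S) hSk 3
      push_cast
      nlinarith [h3]
    · have h1 := key 2
      apply cube_rpow_le (by positivity) hb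
      have hSk : (S:ℝ) ≤ 6 := by exact_mod_cast (by omega : S ≤ 6)
      have h3 := pow_le_pow_left₀ (Nat.cast_nonneg S) hSk 3
      push_cast
      nlinarith [h3]
    · have h1 := key 2
      apply cube_rpow_le (by positivity) hb
      have hSk : (S:ℝ) ≤ 7 := by exact_mod_cast (by omega : S ≤ 7)
      have h3 := pow_le_pow_left₀ (Nat.cast_nonneg S) hSk 3
      push_cast
      nlinarith [h3]
  · -- q ≥ 9 : take T = ⌊(3q)^(1/3)⌋
    set c : ℝ := (3 * (q:ℝ)) ^ ((1:ℝ)/3) with hc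
    have hc0 : 0 ≤ c := Real.rpow_nonneg hb _
    have hc3 : c ^ 3 = 3 * q := by
      rw [hc, ← Real.rpow_natCast ((3 * (q:ℝ)) ^ ((1:ℝ)/3)) 3, ← Real.rpow_mul hb]
      norm_num
    have hgoal : (3 * (q:ℝ)) ^ ((2:ℝ)/3) = c ^ 2 := by
      rw [hc, ← Real.rpow_natCast ((3 * (q:ℝ)) ^ ((1:ℝ)/3)) 2, ← Real.rpow_mul hb]
      norm_num
    have hq9 : (9:ℝ) ≤ q := by exact_mod_cast hbig
    have hc27 : (27:ℝ) ≤ c ^ 3 := by rw [hc3]; linarith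
    have hcge3 : (3:ℝ) ≤ c := by nlinarith [sq_nonneg (c - 3), sq_nonneg (c + 3)]
    set T : ℕ := ⌊c⌋₊ with hT
    have hTle : (T:ℝ) ≤ c := Nat.floor_le hc0
    have hltT : c < T + 1 := Nat.lt_floor_add_one c
    have hT3 : (3:ℝ) ≤ (T:ℝ) := by
      have : (3:ℕ) ≤ T := Nat.le_floor (by exact_mod_cast hcge3)
      exact_mod_cast this
    have hkey := key T
    have hkeyR : 2 * (T:ℝ) * (S:ℝ) ≤ (T:ℝ) * ((T:ℝ) * ((T:ℝ) + 1)) + 2 * q := by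
      exact_mod_cast hkey
    rw [hgoal]
    have hT0 : (0:ℝ) < T := by linarith
    exact big_case_real T S q c hT3 hTle hltT hc3 hkeyR
end

section
/- (Optimization core of the square-root lower bound) Let q >= 1, L >= 1, and let A, D : {1, ..., L} -> ℕ satisfy: A(l) <= D(l) for every l; the partial sums satisfy A(1) + A(2) + ... + A(l) <= l for every l in {1, ..., L} (equivalently, A(l) <= l - (A(1)+...+A(l-1)) for every l); and the sum over l of l * D(l) equals q. Then, writing T = A(1) + ... + A(L), one has T * (T + 1) <= 2q; in particular T <= sqrt(2q). -/
lemma aux13 (A : ℕ → ℕ) :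
    ∀ L : ℕ, (∀ l, 1 ≤ l → l ≤ L → ∑ x ∈ Finset.Icc 1 l, A x ≤ l) →
    (∑ l ∈ Finset.Icc 1 L, A l) * ((∑ l ∈ Finset.Icc 1 L, A l) + 1) ≤
      2 * ∑ l ∈ Finset.Icc 1 L, l * A l := by
  intro L
  induction L with
  | zero => simp
  | succ L ih =>
    intro hp
    have hih := ih (fun l h1 h2 => hp l h1 (by omega))
    have hTL : (∑ l ∈ Finset.Icc 1 L, A l) ≤ L := by
      rcases Nat.eq_zero_or_pos L with h | h
      · subst h; simp
      · exact hp L h (by omega)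
    have hTA : (∑ l ∈ Finset.Icc 1 L, A l) + A (L + 1) ≤ L + 1 := by
      have := hp (L + 1) (by omega) le_rfl
      rwa [Finset.sum_Icc_succ_top (by omega)] at this
    rw [Finset.sum_Icc_succ_top (by omega : 1 ≤ L + 1),
        Finset.sum_Icc_succ_top (by omega : 1 ≤ L + 1)]
    nlinarith [hih, hTL, hTA]

/-- (Optimization core of the square-root lower bound) Let `q ≥ 1`, `L ≥ 1` and
`A, D : {1, …, L} → ℕ` with `A l ≤ D l` for all `l`, partial sums
`A 1 + ⋯ + A l ≤ l` for every `l ∈ {1, …, L}`, and `∑ l, l * D l = q`.  Then,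
with `T = A 1 + ⋯ + A L`, one has `T * (T + 1) ≤ 2q`; in particular
`T ≤ √(2q)`. -/
theorem stmt13 (q L : ℕ) (hq : 1 ≤ q) (hL : 1 ≤ L) (A D : ℕ → ℕ)
    (hAD : ∀ l, 1 ≤ l → l ≤ L → A l ≤ D l)
    (hpartial : ∀ l, 1 ≤ l → l ≤ L → ∑ x ∈ Finset.Icc 1 l, A x ≤ l)
    (hsum : ∑ l ∈ Finset.Icc 1 L, l * D l = q) :
    (∑ l ∈ Finset.Icc 1 L, A l) * ((∑ l ∈ Finset.Icc 1 L, A l) + 1) ≤ 2 * q ∧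
    ((∑ l ∈ Finset.Icc 1 L, A l : ℕ) : ℝ) ≤ Real.sqrt (2 * (q : ℝ)) := by
  have hmono : ∑ l ∈ Finset.Icc 1 L, l * A l ≤ ∑ l ∈ Finset.Icc 1 L, l * D l := by
    apply Finset.sum_le_sum
    intro i hi
    simp only [Finset.mem_Icc] at hi
    exact Nat.mul_le_mul_left i (hAD i hi.1 hi.2)
  have h1 : (∑ l ∈ Finset.Icc 1 L, A l) * ((∑ l ∈ Finset.Icc 1 L, A l) + 1) ≤ 2 * q := by
    calc _ ≤ 2 * ∑ l ∈ Finset.Icc 1 L, l * A l := aux13 A L hpartial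
    _ ≤ 2 * q := by omega
  refine ⟨h1, ?_⟩
  set T := ∑ l ∈ Finset.Icc 1 L, A l
  have h2 : (T : ℝ) ^ 2 ≤ 2 * (q : ℝ) := by
    have h3 : T * T ≤ 2 * q := le_trans (Nat.mul_le_mul_left T (by omega)) h1
    rw [sq]
    exact_mod_cast h3
  calc (T : ℝ) = Real.sqrt ((T : ℝ) ^ 2) := by
        rw [Real.sqrt_sq (by positivity)]
    _ ≤ Real.sqrt (2 * (q : ℝ)) := Real.sqrt_le_sqrt h2
end

section
/- (Theorem: Omega((ln n)^{1/3}) lower bound) There exists a constant C > 0 such that for every q >= 1 and every deterministic online algorithm A : List (Finset ((Fin q) -> Bool)) -> ℕ, there exists a finite sequence S of subsets of the universe U = (Fin q -> Bool) (of size n = 2^q) satisfying T_opt(S) >= floor(q/2) and T(A, S) <= C * q^(2/3). Consequently, since q = log_2 n, every online algorithm has competitive ratio Omega((ln n)^{1/3}). -/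
namespace Stmt14

open Finset

variable (q : ℕ) (A : List (Finset (Fin q → Bool)) → ℕ)

/-- coordinate reading with default -/
def coordB (n : ℕ) (x : Fin q → Bool) : Bool :=
  if h : n < q then x ⟨n, h⟩ else false

/-- the halfspace set on coordinate n -/
def asetQ (n : ℕ) : Finset (Fin q → Bool) :=
  Finset.univ.filter fun x => coordB q n x = true

/-- codim-2 subcube -/
def csetQ (n n' : ℕ) : Finset (Fin q → Bool) :=
  Finset.univ.filter fun x => coordB q n x = false ∧ coordB q n' x = false

def Sab : List (Finset (Fin q → Bool)) := (List.range (2 * (q / 2))).map (asetQ q)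

/-- placement of the n-th among the first 2m sets -/
def gfun (n : ℕ) : ℕ := A ((Sab q).take (n + 1))

/-- number of bins containing a matched co-located (a,b) pair under shift s -/
def Bcnt (s : ℕ) : ℕ :=
  (((Finset.range (q / 2)).filter fun k =>
    gfun q A (q / 2 + (k + s) % (q / 2)) = gfun q A k).image (gfun q A)).card

lemma sqrt_min_bound (m x y : ℕ) : min m (x * y) ≤ Nat.sqrt m * (x + y) := by
  set r := Nat.sqrt m with hr
  rcases le_or_gt x r with h | h
  · calc min m (x * y) ≤ x * y := min_le_right _ _
      _ ≤ r * y := Nat.mul_le_mul_right _ h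
      _ ≤ r * (x + y) := Nat.mul_le_mul_left _ (Nat.le_add_left _ _)
  · rcases le_or_gt y r with h' | h'
    · calc min m (x * y) ≤ x * y := min_le_right _ _
        _ ≤ x * r := Nat.mul_le_mul_left _ h'
        _ = r * x := Nat.mul_comm _ _
        _ ≤ r * (x + y) := Nat.mul_le_mul_left _ (Nat.le_add_right _ _)
    · have h1 : m < (r + 1) * (r + 1) := Nat.lt_succ_sqrt m
      have h2 : (r + 1) * (r + 1) = r * r + 2 * r + 1 := by ring
      have h3 : r * (r + 2) = r * r + 2 * r := by ring
      have h4 : r * (r + 2) ≤ r * (x + y) := Nat.mul_le_mul_left _ (by omega)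
      calc min m (x * y) ≤ m := min_le_left _ _
        _ ≤ r * (r + 2) := by omega
        _ ≤ r * (x + y) := h4

lemma mod_add_inj (m k s s' : ℕ) (hs : s < m) (hs' : s' < m)
    (h : (k + s) % m = (k + s') % m) : s = s' := by
  have h2 : s % m = s' % m :=
    Nat.ModEq.add_left_cancel' k h
  rwa [Nat.mod_eq_of_lt hs, Nat.mod_eq_of_lt hs'] at h2

lemma exists_good_shift (hm : 1 ≤ q / 2) :
    ∃ s < q / 2, Bcnt q A s ≤ 2 * Nat.sqrt (q / 2) := by
  classical
  set m := q / 2 with hmdef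
  set g : ℕ → ℕ := gfun q A with hg
  set r := Nat.sqrt m with hr
  set Bins : Finset ℕ :=
    ((Finset.range m).image g) ∪ ((Finset.range m).image fun k => g (m + k)) with hBins
  -- step 1 : bound each Bcnt by the number of bins hit at shift s
  have hple : ∀ s, Bcnt q A s ≤
      (Bins.filter fun t => ∃ k ∈ Finset.range m, g k = t ∧ g (m + (k + s) % m) = t).card := by
    intro s
    rw [Bcnt]
    simp only [← hmdef, ← hg]
    apply Finset.card_le_card
    intro t ht
    rw [Finset.mem_image] at ht
    obtain ⟨k, hk, rfl⟩ := ht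
    rw [Finset.mem_filter] at hk
    exact Finset.mem_filter.2 ⟨Finset.mem_union_left _ (Finset.mem_image_of_mem _ hk.1),
      k, hk.1, rfl, hk.2⟩
  -- step 2 : swap the double sum
  have hswap : ∑ s ∈ Finset.range m,
      (Bins.filter fun t => ∃ k ∈ Finset.range m, g k = t ∧ g (m + (k + s) % m) = t).card
      = ∑ t ∈ Bins, ((Finset.range m).filter fun s =>
          ∃ k ∈ Finset.range m, g k = t ∧ g (m + (k + s) % m) = t).card := by
    simp_rw [Finset.card_filter]
    rw [Finset.sum_comm]
  -- step 3 : per-bin bound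
  have hperT : ∀ t ∈ Bins, ((Finset.range m).filter fun s =>
      ∃ k ∈ Finset.range m, g k = t ∧ g (m + (k + s) % m) = t).card ≤
      r * (((Finset.range m).filter fun k => g k = t).card +
           ((Finset.range m).filter fun k => g (m + k) = t).card) := by
    intro t _
    have hle1 : ((Finset.range m).filter fun s =>
        ∃ k ∈ Finset.range m, g k = t ∧ g (m + (k + s) % m) = t).card ≤ m := by
      calc _ ≤ (Finset.range m).card := Finset.card_filter_le _ _
        _ = m := Finset.card_range m
    have hle2 : ((Finset.range m).filter fun s =>
        ∃ k ∈ Finset.range m, g k = t ∧ g (m + (k + s) % m) = t).card ≤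
        ((Finset.range m).filter fun k => g k = t).card *
        ((Finset.range m).filter fun k => g (m + k) = t).card := by
      rw [← Finset.card_product]
      apply Finset.card_le_card_of_injOn (fun s =>
        if hs : ∃ k ∈ Finset.range m, g k = t ∧ g (m + (k + s) % m) = t then
          (hs.choose, (hs.choose + s) % m) else (0, 0))
      · intro s hs
        rw [Finset.mem_coe, Finset.mem_filter] at hs
        obtain ⟨hsr, hex⟩ := hs
        beta_reduce
        rw [Finset.mem_coe, dif_pos hex]
        obtain ⟨hk1, hk2, hk3⟩ := hex.choose_spec
        refine Finset.mem_product.2 ⟨Finset.mem_filter.2 ⟨hk1, hk2⟩,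
          Finset.mem_filter.2 ⟨Finset.mem_range.2 (Nat.mod_lt _ (by omega)), hk3⟩⟩
      · intro s hs s' hs' heq
        rw [Finset.mem_coe, Finset.mem_filter] at hs hs'
        obtain ⟨hsr, hex⟩ := hs
        obtain ⟨hsr', hex'⟩ := hs'
        simp only [dif_pos hex, dif_pos hex', Prod.mk.injEq] at heq
        obtain ⟨hk, hmod⟩ := heq
        rw [← hk] at hmod
        exact mod_add_inj m hex.choose s s' (Finset.mem_range.1 hsr)
          (Finset.mem_range.1 hsr') hmod
    calc ((Finset.range m).filter fun s =>
        ∃ k ∈ Finset.range m, g k = t ∧ g (m + (k + s) % m) = t).card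
        ≤ min m (((Finset.range m).filter fun k => g k = t).card *
            ((Finset.range m).filter fun k => g (m + k) = t).card) := le_min hle1 hle2
      _ ≤ r * _ := sqrt_min_bound m _ _
  -- step 4 : fiber sums
  have hcardA : ∑ t ∈ Bins, ((Finset.range m).filter fun k => g k = t).card = m := by
    have := Finset.card_eq_sum_card_fiberwise
      (f := g) (s := Finset.range m) (t := Bins)
      (fun x hx => Finset.mem_union_left _ (Finset.mem_image_of_mem _ hx))
    rw [Finset.card_range] at this
    exact this.symm
  have hcardB : ∑ t ∈ Bins, ((Finset.range m).filter fun k => g (m + k) = t).card = m := by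
    have := Finset.card_eq_sum_card_fiberwise
      (f := fun k => g (m + k)) (s := Finset.range m) (t := Bins)
      (fun x hx => Finset.mem_union_right _ (Finset.mem_image_of_mem _ hx))
    rw [Finset.card_range] at this
    exact this.symm
  -- total bound
  have htot : ∑ s ∈ Finset.range m, Bcnt q A s ≤ 2 * r * m := by
    calc ∑ s ∈ Finset.range m, Bcnt q A s
        ≤ ∑ s ∈ Finset.range m, (Bins.filter fun t =>
            ∃ k ∈ Finset.range m, g k = t ∧ g (m + (k + s) % m) = t).card :=
          Finset.sum_le_sum fun s _ => hple s
      _ = _ := hswap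
      _ ≤ ∑ t ∈ Bins, r * (((Finset.range m).filter fun k => g k = t).card +
            ((Finset.range m).filter fun k => g (m + k) = t).card) :=
          Finset.sum_le_sum hperT
      _ = r * (∑ t ∈ Bins, ((Finset.range m).filter fun k => g k = t).card +
            ∑ t ∈ Bins, ((Finset.range m).filter fun k => g (m + k) = t).card) := by
          rw [← Finset.mul_sum, Finset.sum_add_distrib]
      _ = r * (m + m) := by rw [hcardA, hcardB]
      _ = 2 * r * m := by ring
  by_contra hcon
  push_neg at hcon
  have hlb : m * (2 * r + 1) ≤ ∑ s ∈ Finset.range m, Bcnt q A s := by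
    calc m * (2 * r + 1) = ∑ _s ∈ Finset.range m, (2 * r + 1) := by
          rw [Finset.sum_const, Finset.card_range, smul_eq_mul]
      _ ≤ ∑ s ∈ Finset.range m, Bcnt q A s :=
          Finset.sum_le_sum fun s hs => hcon s (Finset.mem_range.1 hs)
  have : m * (2 * r + 1) = 2 * r * m + m := by ring
  omega

noncomputable def s0 : ℕ :=
  if h : ∃ s < q / 2, Bcnt q A s ≤ 2 * Nat.sqrt (q / 2) then h.choose else 0

noncomputable def SS : List (Finset (Fin q → Bool)) :=
  Sab q ++ (List.range (q / 2)).map fun k =>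
    csetQ q k (q / 2 + (k + s0 q A) % (q / 2))

lemma SS_length : (SS q A).length = 3 * (q / 2) := by
  simp [SS, Sab]; ring

lemma Sab_length : (Sab q).length = 2 * (q / 2) := by simp [Sab]

lemma SS_take (j : ℕ) (hj : j < 2 * (q / 2)) :
    (SS q A).take (j + 1) = (Sab q).take (j + 1) := by
  exact List.take_append_of_le_length (by rw [Sab_length]; omega)

lemma SS_getD_ab (j : ℕ) (hj : j < 2 * (q / 2)) :
    (SS q A).getD j ∅ = asetQ q j := by
  rw [SS, List.getD_eq_getElem _ _ (by simp [Sab]; omega)]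
  rw [List.getElem_append_left (by rw [Sab_length]; omega)]
  have : (Sab q).getD j ∅ = asetQ q j := by
    rw [List.getD_eq_getElem _ _ (by rw [Sab_length]; omega)]
    simp [Sab]
  rw [← this, List.getD_eq_getElem _ _ (by rw [Sab_length]; omega)]

lemma SS_getD_c (k : ℕ) (hk : k < q / 2) :
    (SS q A).getD (2 * (q / 2) + k) ∅ =
      csetQ q k (q / 2 + (k + s0 q A) % (q / 2)) := by
  rw [SS, List.getD_eq_getElem _ _ (by simp [Sab]; omega)]
  rw [List.getElem_append_right (by rw [Sab_length]; omega)]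
  simp [Sab]

/-- key: a completed bin contains a matched triple -/
lemma completed_triple (hq : 1 ≤ q) (b : ℕ) (hb : binUnion A (SS q A) b = Finset.univ) :
    ∃ k < q / 2, gfun q A k = b ∧ gfun q A (q / 2 + (k + s0 q A) % (q / 2)) = b := by
  by_contra hcon
  push_neg at hcon
  set m := q / 2 with hm
  have h2m : 2 * m ≤ q := by omega
  -- the witness point not covered by bin b
  set w : ℕ → Bool := fun n => if n < 2 * m then decide (gfun q A n ≠ b) else false with hw
  set x : Fin q → Bool := fun i => w i.val with hxdef
  have hcoord : ∀ n, n < 2 * m → coordB q n x = w n := by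
    intro n hn
    rw [coordB, dif_pos (by omega)]
  have hx : x ∈ binUnion A (SS q A) b := hb ▸ Finset.mem_univ x
  rw [binUnion, Finset.mem_sup] at hx
  obtain ⟨j, hj, hxj⟩ := hx
  rw [Finset.mem_range, SS_length] at hj
  by_cases hA : A ((SS q A).take (j + 1)) = b
  · rw [if_pos hA] at hxj
    by_cases hj2 : j < 2 * m
    · rw [SS_getD_ab q A j hj2] at hxj
      rw [asetQ, Finset.mem_filter] at hxj
      have := hxj.2
      rw [hcoord j hj2, hw] at this
      simp only [if_pos hj2, decide_eq_true_eq] at this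
      exact this (by rw [gfun, ← SS_take q A j hj2, hA])
    · have hk : j - 2 * m < m := by omega
      have hj' : j = 2 * m + (j - 2 * m) := by omega
      rw [hj', SS_getD_c q A _ hk] at hxj
      rw [csetQ, Finset.mem_filter] at hxj
      obtain ⟨-, h1, h2⟩ := hxj
      set k := j - 2 * m
      have hπ : (k + s0 q A) % m < m := Nat.mod_lt _ (by omega)
      rw [hcoord k (by omega), hw] at h1
      rw [hcoord (m + (k + s0 q A) % m) (by omega), hw] at h2
      simp only [if_pos (show k < 2*m by omega), decide_eq_false_iff_not, not_not] at h1
      simp only [if_pos (show m + (k + s0 q A) % m < 2*m by omega),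
        decide_eq_false_iff_not, not_not] at h2
      exact (hcon k hk h1) h2
  · rw [if_neg hA] at hxj
    exact absurd hxj (Finset.notMem_empty x)

lemma Tonline_le (hq : 1 ≤ q) : TonlineU A (SS q A) ≤ Bcnt q A (s0 q A) := by
  rw [TonlineU, Bcnt]
  apply Finset.card_le_card
  intro b hb
  rw [Finset.mem_filter] at hb
  obtain ⟨k, hk, h1, h2⟩ := completed_triple q A hq b hb.2
  exact Finset.mem_image.2 ⟨k, Finset.mem_filter.2 ⟨Finset.mem_range.2 hk, by rw [h1, h2]⟩, h1⟩

lemma pimod_inj (m s a a' : ℕ) (ha : a < m) (ha' : a' < m)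
    (h : (a + s) % m = (a' + s) % m) : a = a' := by
  have h2 : a % m = a' % m := Nat.ModEq.add_right_cancel' s h
  rwa [Nat.mod_eq_of_lt ha, Nat.mod_eq_of_lt ha'] at h2

lemma SS_get (j : Fin (SS q A).length) : (SS q A).get j = (SS q A).getD j.val ∅ := by
  rw [List.get_eq_getElem, List.getD_eq_getElem _ _ j.isLt]

lemma Topt_ge : q / 2 ≤ ToptL (SS q A) := by
  set m := q / 2 with hmdef
  have hlen := SS_length q A
  have h2m : 2 * m ≤ q := by omega
  have hπlt : ∀ a : ℕ, a < m → (a + s0 q A) % m < m := fun a ha => Nat.mod_lt _ (by omega)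
  rw [ToptL]
  have hmem : m ∈ {k | ∃ C : Fin k → Finset (Fin (SS q A).length),
      (∀ a b, a ≠ b → Disjoint (C a) (C b)) ∧
      ∀ a, ∀ u : (Fin q → Bool), ∃ j ∈ C a, u ∈ (SS q A).get j} := by
    refine ⟨fun a => {⟨a.val, by have := a.isLt; omega⟩,
                      ⟨m + (a.val + s0 q A) % m, by have := hπlt a.val a.isLt; omega⟩,
                      ⟨2 * m + a.val, by have := a.isLt; omega⟩}, ?_, ?_⟩
    · intro a a' hne
      rw [Finset.disjoint_left]
      intro j hj hj'
      have ha := a.isLt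
      have ha' := a'.isLt
      have hpa := hπlt a.val a.isLt
      have hpa' := hπlt a'.val a'.isLt
      simp only [Finset.mem_insert, Finset.mem_singleton] at hj hj'
      have hne' : a.val ≠ a'.val := fun h => hne (Fin.ext h)
      rcases hj with rfl | rfl | rfl <;> rcases hj' with h2 | h2 | h2 <;>
        simp only [Fin.mk.injEq] at h2 <;>
        first
          | exact hne' (pimod_inj m (s0 q A) a.val a'.val ha ha' (by omega))
          | omega
    · intro a u
      have ha := a.isLt
      have hpa := hπlt a.val a.isLt
      by_cases h1 : coordB q a.val u = true
      · refine ⟨_, Finset.mem_insert_self _ _, ?_⟩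
        rw [SS_get, SS_getD_ab q A a.val (by omega)]
        exact Finset.mem_filter.2 ⟨Finset.mem_univ _, h1⟩
      · by_cases h2 : coordB q (m + (a.val + s0 q A) % m) u = true
        · refine ⟨_, Finset.mem_insert_of_mem (Finset.mem_insert_self _ _), ?_⟩
          rw [SS_get]
          show u ∈ (SS q A).getD (m + (a.val + s0 q A) % m) ∅
          rw [SS_getD_ab q A _ (by omega)]
          exact Finset.mem_filter.2 ⟨Finset.mem_univ _, h2⟩
        · refine ⟨_, Finset.mem_insert_of_mem (Finset.mem_insert_of_mem
            (Finset.mem_singleton_self _)), ?_⟩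
          rw [SS_get]
          show u ∈ (SS q A).getD (2 * m + a.val) ∅
          rw [SS_getD_c q A a.val a.isLt]
          exact Finset.mem_filter.2 ⟨Finset.mem_univ _,
            Bool.not_eq_true _ ▸ h1, Bool.not_eq_true _ ▸ h2⟩
  have hbdd : BddAbove {k | ∃ C : Fin k → Finset (Fin (SS q A).length),
      (∀ a b, a ≠ b → Disjoint (C a) (C b)) ∧
      ∀ a, ∀ u : (Fin q → Bool), ∃ j ∈ C a, u ∈ (SS q A).get j} := by
    refine ⟨(SS q A).length, fun k hk => ?_⟩
    obtain ⟨C, hdisj, hcov⟩ := hk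
    have hex : ∀ a : Fin k, ∃ j, j ∈ C a := by
      intro a
      obtain ⟨j, hj, -⟩ := hcov a (fun _ => false)
      exact ⟨j, hj⟩
    choose f hf using hex
    have hinj : Function.Injective f := by
      intro a a' h
      by_contra hne
      exact Finset.disjoint_left.1 (hdisj a a' hne) (hf a) (h ▸ hf a')
    simpa using Fintype.card_le_of_injective f hinj
  exact le_csSup hbdd hmem

end Stmt14

/-- (Ω((ln n)^{1/3}) lower bound) There is a constant `C > 0` such that for every
`q ≥ 1` and every deterministic online algorithm `A` over the universe
`U = (Fin q → Bool)` (of size `n = 2^q`), there is an arrival sequence `S` of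
subsets of `U` with `T_opt(S) ≥ ⌊q/2⌋` and `T(A, S) ≤ C * q^(2/3)`.  Since
`q = log₂ n`, every online algorithm has competitive ratio `Ω((ln n)^{1/3})`. -/
theorem stmt14 : ∃ C : ℝ, 0 < C ∧
    ∀ q : ℕ, 1 ≤ q →
      ∀ A : List (Finset (Fin q → Bool)) → ℕ,
        ∃ S : List (Finset (Fin q → Bool)),
          q / 2 ≤ ToptL S ∧
          (TonlineU A S : ℝ) ≤ C * (q : ℝ) ^ ((2 : ℝ) / 3) := by
  refine ⟨2, by norm_num, fun q hq A => ⟨Stmt14.SS q A, Stmt14.Topt_ge q A, ?_⟩⟩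
  have hq1 : (1 : ℝ) ≤ (q : ℝ) := by exact_mod_cast hq
  have hpow : (0 : ℝ) ≤ (q : ℝ) ^ ((2 : ℝ) / 3) := by positivity
  by_cases hm : 1 ≤ q / 2
  · have hs := Stmt14.exists_good_shift q A hm
    have hs0 : Stmt14.Bcnt q A (Stmt14.s0 q A) ≤ 2 * Nat.sqrt (q / 2) := by
      rw [Stmt14.s0, dif_pos hs]
      exact hs.choose_spec.2
    have hT : TonlineU A (Stmt14.SS q A) ≤ 2 * Nat.sqrt (q / 2) :=
      le_trans (Stmt14.Tonline_le q A hq) hs0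
    have hsq : ((Nat.sqrt (q / 2) : ℕ) : ℝ) ≤ (q : ℝ) ^ ((2 : ℝ) / 3) := by
      have h1 : Nat.sqrt (q / 2) ≤ Nat.sqrt q := Nat.sqrt_le_sqrt (Nat.div_le_self _ _)
      have h2 : ((Nat.sqrt q : ℕ) : ℝ) ≤ Real.sqrt (q : ℝ) := Real.nat_sqrt_le_real_sqrt
      have h3 : Real.sqrt (q : ℝ) = (q : ℝ) ^ ((1 : ℝ) / 2) := Real.sqrt_eq_rpow _
      have h4 : (q : ℝ) ^ ((1 : ℝ) / 2) ≤ (q : ℝ) ^ ((2 : ℝ) / 3) :=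
        Real.rpow_le_rpow_of_exponent_le hq1 (by norm_num)
      calc ((Nat.sqrt (q / 2) : ℕ) : ℝ) ≤ ((Nat.sqrt q : ℕ) : ℝ) := by exact_mod_cast h1
        _ ≤ Real.sqrt (q : ℝ) := h2
        _ = (q : ℝ) ^ ((1 : ℝ) / 2) := h3
        _ ≤ (q : ℝ) ^ ((2 : ℝ) / 3) := h4
    calc ((TonlineU A (Stmt14.SS q A) : ℕ) : ℝ)
        ≤ ((2 * Nat.sqrt (q / 2) : ℕ) : ℝ) := by exact_mod_cast hT
      _ = 2 * ((Nat.sqrt (q / 2) : ℕ) : ℝ) := by push_cast; ring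
      _ ≤ 2 * ((q : ℝ) ^ ((2 : ℝ) / 3)) := by linarith
  · have hq2 : q / 2 = 0 := by omega
    have hzero : TonlineU A (Stmt14.SS q A) = 0 := by
      have hlen := Stmt14.SS_length q A
      rw [TonlineU, hlen, hq2]
      simp
    rw [hzero]
    norm_num
    positivity
end

section
/- (Theorem: Omega(sqrt(ln n)) lower bound) There exists a constant C > 0 such that for every q >= 1 and every deterministic online algorithm A : List (Finset ((Fin q) -> Bool)) -> ℕ, there exists a finite sequence S of subsets of the universe U = (Fin q -> Bool) (of size n = 2^q) satisfying T_opt(S) >= floor(q/2) and T(A, S) <= C * sqrt(q). Consequently, since q = log_2 n, every online algorithm has competitive ratio Omega(sqrt(ln n)). -/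
namespace Stmt15Aux

/-- coordinate `i mod q` -/
def crd (q : ℕ) (hq : 1 ≤ q) (i : ℕ) : Fin q := ⟨i % q, Nat.mod_lt _ hq⟩

lemma crd_inj (q : ℕ) (hq : 1 ≤ q) {i j : ℕ} (hi : i < q) (hj : j < q)
    (h : crd q hq i = crd q hq j) : i = j := by
  have := congrArg Fin.val h
  simpa [crd, Nat.mod_eq_of_lt hi, Nat.mod_eq_of_lt hj] using this

/-- the `i`-th "atom" set: all points whose `i`-th coordinate is `true` -/
def atomS (q : ℕ) (hq : 1 ≤ q) (i : ℕ) : Finset (Fin q → Bool) :=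
  Finset.univ.filter fun x => x (crd q hq i) = true

/-- a "completer" set for the pair of coordinates `(i, j)` -/
def compS (q : ℕ) (hq : 1 ≤ q) (i j : ℕ) : Finset (Fin q → Bool) :=
  Finset.univ.filter fun x => x (crd q hq i) = false ∧ x (crd q hq j) = false

def atomsL (q : ℕ) (hq : 1 ≤ q) : List (Finset (Fin q → Bool)) :=
  List.ofFn fun i : Fin (2 * (q / 2)) => atomS q hq i.val

variable (q : ℕ) (A : List (Finset (Fin q → Bool)) → ℕ)

/-- the bin the algorithm assigns to the `i`-th atom -/
def binOf (hq : 1 ≤ q) (i : ℕ) : ℕ := A ((atomsL q hq).take (i + 1))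

def fF (hq : 1 ≤ q) : Fin (2 * (q / 2)) → ℕ := fun i => binOf q A hq i.val

/-- sorting permutation of the atoms by assigned bin -/
def sp (hq : 1 ≤ q) : Equiv.Perm (Fin (2 * (q / 2))) := Tuple.sort (fF q A hq)

def idxA (p : Fin (q / 2)) : Fin (2 * (q / 2)) := ⟨p.val, by have := p.isLt; omega⟩
def idxB (p : Fin (q / 2)) : Fin (2 * (q / 2)) := ⟨p.val + q / 2, by have := p.isLt; omega⟩

def compsL (hq : 1 ≤ q) : List (Finset (Fin q → Bool)) :=
  List.ofFn fun p : Fin (q / 2) =>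
    compS q hq (sp q A hq (idxA q p)).val (sp q A hq (idxB q p)).val

/-- the adversarial arrival sequence: atoms then completers -/
def seqS (hq : 1 ≤ q) : List (Finset (Fin q → Bool)) := atomsL q hq ++ compsL q A hq

lemma len_atoms (hq : 1 ≤ q) : (atomsL q hq).length = 2 * (q / 2) := by
  simp [atomsL]

lemma len_seq (hq : 1 ≤ q) : (seqS q A hq).length = 2 * (q / 2) + q / 2 := by
  simp [seqS, atomsL, compsL]

lemma getElem_seq_atom (hq : 1 ≤ q) (i : ℕ) (hi : i < 2 * (q / 2))
    (h : i < (seqS q A hq).length) : (seqS q A hq)[i] = atomS q hq i := by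
  simp only [seqS]
  rw [List.getElem_append_left (by rw [len_atoms]; exact hi)]
  simp [atomsL]

lemma getElem_seq_comp (hq : 1 ≤ q) (p : Fin (q / 2))
    (h : 2 * (q / 2) + p.val < (seqS q A hq).length) :
    (seqS q A hq)[2 * (q / 2) + p.val] =
      compS q hq (sp q A hq (idxA q p)).val (sp q A hq (idxB q p)).val := by
  simp only [seqS]
  rw [List.getElem_append_right (by rw [len_atoms]; omega)]
  simp only [compsL]
  rw [List.getElem_ofFn]
  suffices hsuff : ∀ i' : Fin (q / 2), i'.val = p.val →
      compS q hq (sp q A hq (idxA q i')).val (sp q A hq (idxB q i')).val =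
      compS q hq (sp q A hq (idxA q p)).val (sp q A hq (idxB q p)).val by
    exact hsuff _ (show 2 * (q / 2) + p.val - (atomsL q hq).length = p.val by
      rw [len_atoms q hq]; omega)
  intro i' h'
  rw [Fin.ext h']

lemma take_seq_atom (hq : 1 ≤ q) (j : ℕ) (hj : j < 2 * (q / 2)) :
    (seqS q A hq).take (j + 1) = (atomsL q hq).take (j + 1) := by
  rw [seqS, List.take_append_of_le_length (by rw [len_atoms]; omega)]

/-- the witness point avoiding bin `β` -/
def badx (hq : 1 ≤ q) (β : ℕ) : Fin q → Bool := fun t =>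
  decide (∀ i : Fin (2 * (q / 2)), binOf q A hq i.val = β → crd q hq i.val ≠ t)

lemma badx_true_iff (hq : 1 ≤ q) (β : ℕ) (t : Fin q) :
    badx q A hq β t = true ↔
      ∀ i : Fin (2 * (q / 2)), binOf q A hq i.val = β → crd q hq i.val ≠ t := by
  simp [badx]

/-- Key lemma: if bin `β` is full then both atoms of some matched pair were placed in `β`. -/
lemma exists_pair (hq : 1 ≤ q) (β : ℕ)
    (hfull : binUnion A (seqS q A hq) β = Finset.univ) :
    ∃ p : Fin (q / 2), fF q A hq (sp q A hq (idxA q p)) = β ∧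
      fF q A hq (sp q A hq (idxB q p)) = β := by
  by_contra hcon
  push_neg at hcon
  have hx : badx q A hq β ∈ binUnion A (seqS q A hq) β := by
    rw [hfull]; exact Finset.mem_univ _
  rw [binUnion, Finset.mem_sup] at hx
  obtain ⟨j, hj, hxj⟩ := hx
  rw [Finset.mem_range, len_seq] at hj
  split_ifs at hxj with hA
  swap
  · exact absurd hxj (Finset.notMem_empty _)
  rw [List.getD_eq_getElem _ _ (by rw [len_seq]; omega)] at hxj
  by_cases hcase : j < 2 * (q / 2)
  · -- an atom assigned to bin β, but badx is false at its coordinate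
    rw [getElem_seq_atom q A hq j hcase] at hxj
    rw [atomS, Finset.mem_filter] at hxj
    have hP := (badx_true_iff q A hq β _).mp hxj.2
    have hbin : binOf q A hq j = β := by
      rw [binOf, ← take_seq_atom q A hq j hcase]; exact hA
    exact hP ⟨j, hcase⟩ hbin rfl
  · -- a completer: both endpoints of its pair must be in bin β
    push_neg at hcase
    obtain ⟨pv, rfl⟩ : ∃ pv, j = 2 * (q / 2) + pv := ⟨j - 2 * (q / 2), by omega⟩
    set p : Fin (q / 2) := ⟨pv, by omega⟩ with hp
    have hxj' : badx q A hq β ∈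
        compS q hq (sp q A hq (idxA q p)).val (sp q A hq (idxB q p)).val := by
      rw [← getElem_seq_comp q A hq p (by rw [len_seq]; have := p.isLt; omega)]
      exact hxj
    rw [compS, Finset.mem_filter] at hxj'
    have key : ∀ i1 : Fin (2 * (q / 2)), badx q A hq β (crd q hq i1.val) = false →
        binOf q A hq i1.val = β := by
      intro i1 hfalse
      have hnP : ¬ (∀ i : Fin (2 * (q / 2)), binOf q A hq i.val = β →
          crd q hq i.val ≠ crd q hq i1.val) := by
        intro hAll
        have h2 := (badx_true_iff q A hq β (crd q hq i1.val)).mpr hAll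
        rw [h2] at hfalse; exact Bool.noConfusion hfalse
      push_neg at hnP
      obtain ⟨i, hiβ, hieq⟩ := hnP
      have : i.val = i1.val := crd_inj q hq (by have := i.isLt; omega)
        (by have := i1.isLt; omega) hieq
      rwa [this] at hiβ
    exact hcon p (key _ hxj'.2.1) (key _ hxj'.2.2)

lemma spv_inj (hq : 1 ≤ q) {X Y : Fin (2 * (q / 2))}
    (h : (sp q A hq X).val = (sp q A hq Y).val) : X.val = Y.val :=
  congrArg Fin.val ((sp q A hq).injective (Fin.val_injective h))

lemma pair_le (hq : 1 ≤ q) {β β' : ℕ} {p p' : Fin (q / 2)} (hle : p.val ≤ p'.val)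
    (hp1 : fF q A hq (sp q A hq (idxA q p)) = β)
    (hp2 : fF q A hq (sp q A hq (idxB q p)) = β)
    (hp1' : fF q A hq (sp q A hq (idxA q p')) = β') : β = β' := by
  have hmono : Monotone (fF q A hq ∘ sp q A hq) := Tuple.monotone_sort (fF q A hq)
  have h1 : β ≤ β' := by
    rw [← hp1, ← hp1']
    exact hmono (show idxA q p ≤ idxA q p' by simp only [idxA, Fin.mk_le_mk]; exact hle)
  have h2 : β' ≤ β := by
    rw [← hp1', ← hp2]
    exact hmono (show idxA q p' ≤ idxB q p by
      simp only [idxA, idxB, Fin.mk_le_mk]; have := p'.isLt; omega)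
  omega

/-- at most one bin can ever be full -/
lemma full_unique (hq : 1 ≤ q) (β β' : ℕ)
    (h : binUnion A (seqS q A hq) β = Finset.univ)
    (h' : binUnion A (seqS q A hq) β' = Finset.univ) : β = β' := by
  obtain ⟨p, hp1, hp2⟩ := exists_pair q A hq β h
  obtain ⟨p', hp1', hp2'⟩ := exists_pair q A hq β' h'
  rcases le_total p.val p'.val with hle | hle
  · exact pair_le q A hq hle hp1 hp2 hp1'
  · exact (pair_le q A hq hle hp1' hp2' hp1).symm

lemma topt_bdd (S : List (Finset (Fin q → Bool))) (hq : 1 ≤ q) :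
    BddAbove {k | ∃ C : Fin k → Finset (Fin S.length),
      (∀ a b, a ≠ b → Disjoint (C a) (C b)) ∧
      ∀ a, ∀ u : Fin q → Bool, ∃ j ∈ C a, u ∈ S.get j} := by
  refine ⟨S.length, fun k hk => ?_⟩
  obtain ⟨C, hdisj, hcov⟩ := hk
  choose f hf1 _ using fun a => hcov a (fun _ => false)
  have hinj : Function.Injective f := by
    intro a b hab
    by_contra hne
    exact (Finset.disjoint_left.mp (hdisj a b hne)) (hf1 a) (hab ▸ hf1 b)
  simpa using Fintype.card_le_of_injective f hinj

/-- OPT is at least `⌊q/2⌋` on the adversarial sequence. -/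
lemma topt_ge (hq : 1 ≤ q) : q / 2 ≤ ToptL (seqS q A hq) := by
  rw [ToptL]
  apply le_csSup (topt_bdd q _ hq)
  refine ⟨fun p =>
    { ⟨(sp q A hq (idxA q p)).val, by rw [len_seq]; have := (sp q A hq (idxA q p)).isLt; omega⟩,
      ⟨(sp q A hq (idxB q p)).val, by rw [len_seq]; have := (sp q A hq (idxB q p)).isLt; omega⟩,
      ⟨2 * (q / 2) + p.val, by rw [len_seq]; have := p.isLt; omega⟩ }, ?_, ?_⟩
  · -- disjointness
    intro a b hne
    have hvne : a.val ≠ b.val := fun h => hne (Fin.ext h)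
    rw [Finset.disjoint_left]
    intro x hxa hxb
    have hA1 := (sp q A hq (idxA q a)).isLt
    have hB1 := (sp q A hq (idxB q a)).isLt
    have hA2 := (sp q A hq (idxA q b)).isLt
    have hB2 := (sp q A hq (idxB q b)).isLt
    simp only [Finset.mem_insert, Finset.mem_singleton] at hxa hxb
    rcases hxa with h1 | h1 | h1 <;> rcases hxb with h2 | h2 | h2 <;>
      · have hv := congrArg Fin.val (h1.symm.trans h2)
        simp only [] at hv
        first
        | (have := spv_inj q A hq hv; simp only [idxA, idxB] at this; omega)
        | (have := spv_inj q A hq hv.symm; simp only [idxA, idxB] at this; omega)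
        | omega
  · -- each triple covers the universe
    intro p u
    by_cases hA : u (crd q hq (sp q A hq (idxA q p)).val) = true
    · refine ⟨_, Finset.mem_insert_self _ _, ?_⟩
      rw [List.get_eq_getElem,
        getElem_seq_atom q A hq _ ((sp q A hq (idxA q p)).isLt) _]
      simp [atomS, hA]
    · by_cases hB : u (crd q hq (sp q A hq (idxB q p)).val) = true
      · refine ⟨_, Finset.mem_insert_of_mem (Finset.mem_insert_self _ _), ?_⟩
        rw [List.get_eq_getElem,
          getElem_seq_atom q A hq _ ((sp q A hq (idxB q p)).isLt) _]
        simp [atomS, hB]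
      · refine ⟨_, Finset.mem_insert_of_mem (Finset.mem_insert_of_mem
          (Finset.mem_singleton_self _)), ?_⟩
        rw [List.get_eq_getElem, getElem_seq_comp q A hq p _]
        simp only [compS, Finset.mem_filter, Finset.mem_univ, true_and]
        exact ⟨Bool.eq_false_iff.mpr (fun h => hA h), Bool.eq_false_iff.mpr (fun h => hB h)⟩

end Stmt15Aux

/-- (Ω(√(ln n)) lower bound) There is a constant `C > 0` such that for every
`q ≥ 1` and every deterministic online algorithm `A` over the universe
`U = (Fin q → Bool)` (of size `n = 2^q`), there is an arrival sequence `S` of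
subsets of `U` with `T_opt(S) ≥ ⌊q/2⌋` and `T(A, S) ≤ C * √q`.  Since
`q = log₂ n`, every online algorithm has competitive ratio `Ω(√(ln n))`. -/
theorem stmt15 : ∃ C : ℝ, 0 < C ∧
    ∀ q : ℕ, 1 ≤ q →
      ∀ A : List (Finset (Fin q → Bool)) → ℕ,
        ∃ S : List (Finset (Fin q → Bool)),
          q / 2 ≤ ToptL S ∧
          (TonlineU A S : ℝ) ≤ C * Real.sqrt (q : ℝ) := by
  refine ⟨1, one_pos, fun q hq A => ⟨Stmt15Aux.seqS q A hq, Stmt15Aux.topt_ge q A hq, ?_⟩⟩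
  have hcard : TonlineU A (Stmt15Aux.seqS q A hq) ≤ 1 := by
    rw [TonlineU]
    refine Finset.card_le_one.mpr fun a ha b hb => ?_
    exact Stmt15Aux.full_unique q A hq a b
      (Finset.mem_filter.mp ha).2 (Finset.mem_filter.mp hb).2
  calc (TonlineU A (Stmt15Aux.seqS q A hq) : ℝ) ≤ 1 := by exact_mod_cast hcard
    _ ≤ 1 * Real.sqrt q := by
        rw [one_mul, ← Real.sqrt_one]
        exact Real.sqrt_le_sqrt (by exact_mod_cast hq)
end

section
/- (Tight instances) There exist infinitely many natural numbers n for which there is a finite indexed family S of subsets of Fin n with union equal to Fin n such that T_opt(S) <= F_min(S) / ln n. Consequently, on such instances any algorithm producing F_min/ln n disjoint set covers is optimal (competitive ratio 1). -/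
open Finset Nat


private lemma binom2 (x y : ℕ) : ∀ c : ℕ, x ^ (c+1) + (c+1) * y * x ^ c ≤ (x + y) ^ (c+1) := by
  intro c
  induction c with
  | zero => simp [pow_succ]
  | succ c ih =>
      have h2 : (x ^ (c+1) + (c+1) * y * x ^ c) * (x + y) ≤ (x + y) ^ (c+1) * (x + y) :=
        Nat.mul_le_mul_right _ ih
      calc x ^ (c+1+1) + (c+1+1) * y * x ^ (c+1)
          ≤ (x ^ (c+1) + (c+1) * y * x ^ c) * (x + y) := by
            ring_nf
            nlinarith [Nat.zero_le (x ^ c * c * y ^ 2), Nat.zero_le (x ^ c * y ^ 2)]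
        _ ≤ (x + y) ^ (c+1) * (x + y) := h2
        _ = (x + y) ^ (c+1+1) := by ring

private lemma two_mul_pow_le {a b c : ℕ} (hb : 1 ≤ b) (hba : b ≤ a) (h : a ≤ c * b) :
    2 * (a - b) ^ c ≤ a ^ c := by
  cases c with
  | zero => omega
  | succ c =>
      have hx : a - b + b = a := Nat.sub_add_cancel hba
      have h1 : (a - b) ^ (c+1) + (c+1) * b * (a - b) ^ c ≤ a ^ (c+1) := by
        have := binom2 (a - b) b c
        rwa [hx] at this
      have h2 : (a - b) ^ (c+1) ≤ (c+1) * b * (a - b) ^ c := by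
        calc (a - b) ^ (c+1) = (a - b) * (a - b) ^ c := by ring
          _ ≤ (c+1) * b * (a - b) ^ c := Nat.mul_le_mul_right _ (by omega)
      omega

private lemma turan_count (f d m n0 : ℕ) (hf : 1 ≤ f) (hfd : f ≤ d) (hdm : d ≤ m)
    (hm : 1 ≤ m) (hn0 : n0 = 2 * (m.choose f / d.choose f + 1) * m) :
    m.choose d * (m.choose f - d.choose f) ^ n0 < m.choose f ^ n0 := by
  set K := m.choose f with hK
  set Q := d.choose f with hQdef
  have hQ1 : 1 ≤ Q := Nat.choose_pos hfd
  have hQK : Q ≤ K := Nat.choose_le_choose f hdm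
  have hK1 : 1 ≤ K := le_trans hQ1 hQK
  clear_value K Q
  obtain ⟨c, hcb, hn0⟩ : ∃ c : ℕ, K ≤ c * Q ∧ n0 = 2 * c * m := by
    refine ⟨K / Q + 1, ?_, hn0⟩
    have h1 : K % Q < Q := Nat.mod_lt _ hQ1
    have h2 := Nat.div_add_mod K Q
    have h3 : (K / Q + 1) * Q = Q * (K / Q) + Q := by ring
    omega
  have h2 : 2 * (K - Q) ^ c ≤ K ^ c := two_mul_pow_le hQ1 hQK hcb
  have hsq : 4 * (K - Q) ^ (2 * c) ≤ K ^ (2 * c) := by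
    have h := Nat.mul_le_mul h2 h2
    have e1 : 2 * (K - Q) ^ c * (2 * (K - Q) ^ c) = 4 * (K - Q) ^ (2 * c) := by
      rw [two_mul c, pow_add]; ring
    have e2 : K ^ c * K ^ c = K ^ (2 * c) := by rw [two_mul c, pow_add]
    rwa [e1, e2] at h
  have hpow : 4 ^ m * (K - Q) ^ n0 ≤ K ^ n0 := by
    have h := Nat.pow_le_pow_left hsq m
    have e1 : (4 * (K - Q) ^ (2 * c)) ^ m = 4 ^ m * (K - Q) ^ n0 := by
      rw [mul_pow, ← pow_mul, ← hn0]
    have e2 : (K ^ (2 * c)) ^ m = K ^ n0 := by rw [← pow_mul, ← hn0]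
    rwa [e1, e2] at h
  have hchoose : m.choose d ≤ 2 ^ m := by
    have h := Finset.single_le_sum (f := fun i => m.choose i)
      (fun i _ => Nat.zero_le _) (Finset.mem_range.2 (by omega : d < m + 1))
    rwa [Nat.sum_range_choose] at h
  rcases Nat.eq_zero_or_pos (K - Q) with h0 | h0
  · have hc1 : 0 < c := by nlinarith [hcb, hK1]
    have hn01 : 0 < n0 := by
      rw [hn0]; exact Nat.mul_pos (Nat.mul_pos two_pos hc1) hm
    rw [h0, Nat.zero_pow (by omega), Nat.mul_zero]
    exact pow_pos hK1 n0
  · calc m.choose d * (K - Q) ^ n0 ≤ 2 ^ m * (K - Q) ^ n0 :=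
          Nat.mul_le_mul_right _ hchoose
      _ < 4 ^ m * (K - Q) ^ n0 := by
          have h24 : (2:ℕ) ^ m < 4 ^ m := Nat.pow_lt_pow_left (by omega) (by omega)
          exact mul_lt_mul_of_pos_right h24 (pow_pos h0 n0)
      _ ≤ K ^ n0 := hpow

private lemma turan_exists (f d m n0 : ℕ) (hf : 1 ≤ f) (hfd : f ≤ d) (hdm : d ≤ m)
    (hm : 1 ≤ m) (hn0 : n0 = 2 * (m.choose f / d.choose f + 1) * m) :
    ∃ F : Fin n0 → Finset (Fin m), (∀ i, (F i).card = f) ∧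
      ∀ D : Finset (Fin m), D.card = d → ∃ i, F i ⊆ D := by
  classical
  set Ω : Finset (Finset (Fin m)) := (univ : Finset (Fin m)).powersetCard f with hΩdef
  have hΩcard : Ω.card = m.choose f := by
    rw [hΩdef, Finset.card_powersetCard, Finset.card_univ, Fintype.card_fin]
  set A : Finset (Fin n0 → Finset (Fin m)) := Fintype.piFinset (fun _ => Ω) with hAdef
  have hAcard : A.card = m.choose f ^ n0 := by
    rw [hAdef, Fintype.card_piFinset]
    simp [hΩcard]
  set 𝒟 : Finset (Finset (Fin m)) := (univ : Finset (Fin m)).powersetCard d with h𝒟def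
  have key : ∃ F ∈ A, ∀ D ∈ 𝒟, ∃ i, F i ⊆ D := by
    by_contra hcon
    push_neg at hcon
    have hsub : A ⊆ 𝒟.biUnion
        (fun D => Fintype.piFinset (fun _ : Fin n0 => Ω.filter (fun s => ¬ s ⊆ D))) := by
      intro F hF
      obtain ⟨D, hD, hFD⟩ := hcon F hF
      refine Finset.mem_biUnion.2 ⟨D, hD, ?_⟩
      rw [Fintype.mem_piFinset]
      intro i
      exact Finset.mem_filter.2 ⟨Fintype.mem_piFinset.1 hF i, hFD i⟩
    have hbadcard : ∀ D ∈ 𝒟,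
        (Fintype.piFinset (fun _ : Fin n0 => Ω.filter (fun s => ¬ s ⊆ D))).card
          = (m.choose f - d.choose f) ^ n0 := by
      intro D hD
      have hDcard : D.card = d := (Finset.mem_powersetCard.1 hD).2
      have hpos : (Ω.filter (fun s => s ⊆ D)).card = d.choose f := by
        have : Ω.filter (fun s => s ⊆ D) = D.powersetCard f := by
          ext s
          simp only [Finset.mem_filter, hΩdef, Finset.mem_powersetCard, Finset.subset_univ,
            true_and]
          tauto
        rw [this, Finset.card_powersetCard, hDcard]
      have hneg : (Ω.filter (fun s => ¬ s ⊆ D)).card = m.choose f - d.choose f := by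
        have h := Finset.card_filter_add_card_filter_not
          (s := Ω) (p := fun s => s ⊆ D)
        omega
      rw [Fintype.card_piFinset]
      simp [hneg]
    have hcard : A.card ≤ 𝒟.card * (m.choose f - d.choose f) ^ n0 := by
      calc A.card ≤ (𝒟.biUnion _).card := Finset.card_le_card hsub
        _ ≤ ∑ D ∈ 𝒟, (Fintype.piFinset (fun _ : Fin n0 => Ω.filter (fun s => ¬ s ⊆ D))).card :=
            Finset.card_biUnion_le
        _ = 𝒟.card * (m.choose f - d.choose f) ^ n0 := by
            rw [Finset.sum_congr rfl hbadcard, Finset.sum_const, smul_eq_mul]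
    have h𝒟card : 𝒟.card = m.choose d := by
      rw [h𝒟def, Finset.card_powersetCard, Finset.card_univ, Fintype.card_fin]
    have := turan_count f d m n0 hf hfd hdm hm hn0
    rw [hAcard] at hcard
    rw [h𝒟card] at hcard
    omega
  obtain ⟨F, hFA, hFgood⟩ := key
  refine ⟨F, fun i => ?_, fun D hD => ?_⟩
  · have := Fintype.mem_piFinset.1 hFA i
    exact (Finset.mem_powersetCard.1 this).2
  · exact hFgood D (Finset.mem_powersetCard.2 ⟨Finset.subset_univ _, hD⟩)

private lemma ratio_bound (f : ℕ) (hf : 1 ≤ f) :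
    ((32*f).choose f : ℝ) ≤ ((16*f).choose f : ℝ) * (32/15) ^ f := by
  have a1 : f ! * (32*f).choose f ≤ (32*f)^f := by
    rw [← Nat.descFactorial_eq_factorial_mul_choose]
    exact Nat.descFactorial_le_pow _ _
  have a2 : (15*f+1)^f ≤ f ! * (16*f).choose f := by
    have h := Nat.pow_sub_le_descFactorial (16*f) f
    rw [Nat.descFactorial_eq_factorial_mul_choose] at h
    have he : 16*f + 1 - f = 15*f + 1 := by omega
    rwa [he] at h
  have a3 : (15*f)^f ≤ (15*f+1)^f := Nat.pow_le_pow_left (by omega) f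
  have key : (32*f).choose f * (15*f)^f ≤ (16*f).choose f * (32*f)^f := by
    have h1 : f ! * ((32*f).choose f * (15*f)^f) ≤ f ! * ((16*f).choose f * (32*f)^f) := by
      calc f ! * ((32*f).choose f * (15*f)^f) = (f ! * (32*f).choose f) * (15*f)^f := by ring
        _ ≤ (32*f)^f * (15*f)^f := Nat.mul_le_mul_right _ a1
        _ ≤ (32*f)^f * (15*f+1)^f := Nat.mul_le_mul_left _ a3
        _ ≤ (32*f)^f * (f ! * (16*f).choose f) := Nat.mul_le_mul_left _ a2
        _ = f ! * ((16*f).choose f * (32*f)^f) := by ring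
    exact Nat.le_of_mul_le_mul_left h1 (Nat.factorial_pos f)
  have keyR : ((32*f).choose f : ℝ) * ((15*f : ℝ))^f
      ≤ ((16*f).choose f : ℝ) * ((32*f : ℝ))^f := by exact_mod_cast key
  have hsplit : ((32*f : ℝ))^f = (32/15)^f * ((15*f : ℝ))^f := by
    rw [← mul_pow]
    ring_nf
  have hpos : (0:ℝ) < ((15*f : ℝ))^f := by
    have hf' : (1:ℝ) ≤ (f:ℝ) := by exact_mod_cast hf
    positivity
  rw [hsplit, ← mul_assoc] at keyR
  exact le_of_mul_le_mul_right keyR hpos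

private lemma growth40 : ∀ f : ℕ, 40 ≤ f → 128 * (f:ℝ) ≤ (127/100) ^ f := by
  intro f hf
  induction f, hf using Nat.le_induction with
  | base => norm_num
  | succ n hn ih =>
      have h1 : ((127:ℝ)/100) ^ (n+1) = (127/100) * (127/100) ^ n := by ring
      have h2 : (40:ℝ) ≤ (n:ℝ) := by exact_mod_cast hn
      push_cast
      rw [h1]
      nlinarith [ih]

private lemma n0_le_exp (f n0 : ℕ) (hf : 40 ≤ f)
    (hn0 : n0 = 2 * ((32*f).choose f / (16*f).choose f + 1) * (32*f)) :
    (n0:ℝ) ≤ Real.exp f := by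
  have hf1 : 1 ≤ f := by omega
  set K := (32*f).choose f with hK
  set Q := (16*f).choose f with hQ
  have hQpos : 0 < Q := Nat.choose_pos (by omega)
  have hQK : Q ≤ K := Nat.choose_le_choose f (by omega)
  have hdivle : ((K / Q : ℕ) : ℝ) ≤ (K:ℝ) / (Q:ℝ) := Nat.cast_div_le
  have hQR : (0:ℝ) < (Q:ℝ) := by exact_mod_cast hQpos
  have hratio : (K:ℝ) / (Q:ℝ) ≤ (32/15) ^ f := by
    rw [div_le_iff₀ hQR]
    have := ratio_bound f hf1
    linarith [this]
  have hge1 : (1:ℝ) ≤ (K:ℝ) / (Q:ℝ) := by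
    rw [le_div_iff₀ hQR]
    simpa using (by exact_mod_cast hQK : (Q:ℝ) ≤ (K:ℝ))
  have hcast : (n0:ℝ) = 2 * (((K / Q : ℕ) : ℝ) + 1) * (32*(f:ℝ)) := by
    rw [hn0]; push_cast; ring
  have step1 : (n0:ℝ) ≤ 128 * (f:ℝ) * ((K:ℝ)/(Q:ℝ)) := by
    rw [hcast]
    have h1 : ((K / Q : ℕ) : ℝ) + 1 ≤ 2 * ((K:ℝ)/(Q:ℝ)) := by linarith
    have hfpos : (0:ℝ) ≤ (f:ℝ) := Nat.cast_nonneg f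
    nlinarith
  have step2 : (n0:ℝ) ≤ 128 * (f:ℝ) * (32/15) ^ f := by
    have hfpos : (0:ℝ) ≤ 128 * (f:ℝ) := by positivity
    nlinarith [pow_pos (show (0:ℝ) < 32/15 by norm_num) f]
  have step3 : (n0:ℝ) ≤ (127/100) ^ f * (32/15) ^ f := by
    have := growth40 f hf
    nlinarith [pow_pos (show (0:ℝ) < 32/15 by norm_num) f]
  calc (n0:ℝ) ≤ (127/100) ^ f * (32/15) ^ f := step3
    _ = ((127:ℝ)/100 * (32/15)) ^ f := by rw [mul_pow]
    _ ≤ (Real.exp 1) ^ f := by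
        apply pow_le_pow_left₀ (by norm_num)
        have := Real.exp_one_gt_d9
        norm_num at this ⊢
        linarith
    _ = Real.exp f := Real.exp_one_pow f

/-- (Tight instances) There are infinitely many `n` for which there is a finite
indexed family `S` of subsets of `Fin n`, whose union is `Fin n`, with
`T_opt(S) ≤ F_min(S) / ln n`.  On such instances any algorithm producing
`F_min / ln n` disjoint set covers is optimal (competitive ratio `1`). -/
theorem stmt16 : ∀ N : ℕ, ∃ n : ℕ, N ≤ n ∧
    ∃ (ι : Type) (_ : Fintype ι) (S : ι → Finset (Fin n)),
      (∀ u : Fin n, ∃ j : ι, u ∈ S j) ∧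
      (ToptFam S : ℝ) ≤ (FminFam S : ℝ) / Real.log n := by
  classical
  intro N
  set f := max 40 N with hfdef
  have hf40 : 40 ≤ f := le_max_left _ _
  have hfN : N ≤ f := le_max_right _ _
  have hf1 : 1 ≤ f := by omega
  set d := 16 * f with hddef
  set m := 32 * f with hmdef
  set n0 := 2 * (m.choose f / d.choose f + 1) * m with hn0def
  obtain ⟨F, hFcard, hFturan⟩ := turan_exists f d m n0 hf1 (by omega) (by omega) (by omega) rfl
  have hn0pos : 64 ≤ n0 := by
    have h1 : 1 ≤ m.choose f / d.choose f + 1 := Nat.succ_le_succ (Nat.zero_le _)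
    have h2 : 32 ≤ m := by omega
    calc 64 = 2 * 1 * 32 := by norm_num
      _ ≤ 2 * (m.choose f / d.choose f + 1) * m :=
          Nat.mul_le_mul (Nat.mul_le_mul_left 2 h1) h2
  set n := max N n0 with hndef
  have hNn : N ≤ n := le_max_left _ _
  have hn0n : n0 ≤ n := le_max_right _ _
  have hn2 : 2 ≤ n := by omega
  refine ⟨n, hNn, Fin m, inferInstance, ?_⟩
  set S : Fin m → Finset (Fin n) :=
    fun j => univ.filter (fun u : Fin n => ∀ h : (u:ℕ) < n0, j ∈ F ⟨(u:ℕ), h⟩) with hSdef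
  have hmem : ∀ (j : Fin m) (u : Fin n),
      u ∈ S j ↔ ∀ h : (u:ℕ) < n0, j ∈ F ⟨(u:ℕ), h⟩ := by
    intro j u
    simp [hSdef]
  refine ⟨S, ?_, ?_⟩
  · -- coverage
    intro u
    by_cases h : (u:ℕ) < n0
    · have : (F ⟨(u:ℕ), h⟩).Nonempty := by
        rw [← Finset.card_pos, hFcard]; omega
      obtain ⟨j, hj⟩ := this
      exact ⟨j, (hmem j u).2 (fun h' => hj)⟩
    · refine ⟨⟨0, by omega⟩, (hmem _ u).2 (fun h' => absurd h' h)⟩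
  · -- main inequality
    -- cover size lower bound
    have hcoversize : ∀ Cs : Finset (Fin m), (∀ u : Fin n, ∃ j ∈ Cs, u ∈ S j) →
        d + 1 ≤ Cs.card := by
      intro Cs hCs
      by_contra hle
      push_neg at hle
      have hcompl : d ≤ Csᶜ.card := by
        rw [Finset.card_compl, Fintype.card_fin]
        omega
      obtain ⟨D, hDsub, hDcard⟩ := Finset.exists_subset_card_eq hcompl
      obtain ⟨i, hiD⟩ := hFturan D hDcard
      have hin : (i:ℕ) < n := lt_of_lt_of_le i.isLt hn0n
      set u0 : Fin n := ⟨(i:ℕ), hin⟩ with hu0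
      obtain ⟨j, hjCs, hju⟩ := hCs u0
      have hj' := (hmem j u0).1 hju i.isLt
      have hji : j ∈ F i := by
        have : (⟨(u0:ℕ), i.isLt⟩ : Fin n0) = i := by
          apply Fin.ext; rfl
        rwa [this] at hj'
      have : j ∈ Csᶜ := hDsub (hiD hji)
      rw [Finset.mem_compl] at this
      exact this hjCs
    -- Topt ≤ 1
    have hTopt : ToptFam S ≤ 1 := by
      apply csSup_le
      · exact ⟨0, fun a => a.elim0, fun a => a.elim0, fun a => a.elim0⟩
      · rintro k ⟨C, hdisj, hcov⟩
        by_contra hk2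
        push_neg at hk2
        have hk2' : 2 ≤ k := hk2
        set a0 : Fin k := ⟨0, by omega⟩
        set a1 : Fin k := ⟨1, by omega⟩
        have hne : a0 ≠ a1 := by
          simp [a0, a1, Fin.ext_iff]
        have hd0 := hcoversize (C a0) (hcov a0)
        have hd1 := hcoversize (C a1) (hcov a1)
        have hdisj01 := hdisj a0 a1 hne
        have hunion : (C a0 ∪ C a1).card = (C a0).card + (C a1).card :=
          Finset.card_union_of_disjoint hdisj01
        have hle : (C a0 ∪ C a1).card ≤ m := by
          have := Finset.card_le_univ (C a0 ∪ C a1)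
          rwa [Fintype.card_fin] at this
        omega
    -- Fmin ≥ f
    have hFmin : f ≤ FminFam S := by
      apply le_csInf
      · have : Nonempty (Fin n) := ⟨⟨0, by omega⟩⟩
        exact Set.range_nonempty _
      · rintro b ⟨u, rfl⟩
        show f ≤ freqFam S u
        unfold freqFam
        by_cases h : (u:ℕ) < n0
        · have hiff : ∀ j : Fin m, u ∈ S j ↔ j ∈ F ⟨(u:ℕ), h⟩ := by
            intro j
            rw [hmem j u]
            exact ⟨fun H => H h, fun H h' => H⟩
          have : Nat.card {j : Fin m // u ∈ S j} = (F ⟨(u:ℕ), h⟩).card := by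
            rw [Nat.card_congr (Equiv.subtypeEquivRight hiff)]
            rw [Nat.card_eq_fintype_card]
            exact Fintype.card_coe _
          rw [this, hFcard]
        · have hall : ∀ j : Fin m, u ∈ S j := fun j => (hmem j u).2 (fun h' => absurd h' h)
          have : Nat.card {j : Fin m // u ∈ S j} = m := by
            rw [Nat.card_congr (Equiv.subtypeUnivEquiv hall)]
            simp [Nat.card_eq_fintype_card]
          rw [this]
          omega
    -- log bound
    have hnpos : (0:ℝ) < (n:ℝ) := by
      have : (2:ℝ) ≤ (n:ℝ) := by exact_mod_cast hn2
      linarith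
    have hlogpos : 0 < Real.log n := Real.log_pos (by
      have : (2:ℝ) ≤ (n:ℝ) := by exact_mod_cast hn2
      linarith)
    have hlogle : Real.log n ≤ (f:ℝ) := by
      rw [Real.log_le_iff_le_exp hnpos]
      rw [hndef, Nat.cast_max]
      apply max_le
      · have h1 : (N:ℝ) ≤ (f:ℝ) := by exact_mod_cast hfN
        have h2 : (f:ℝ) + 1 ≤ Real.exp f := Real.add_one_le_exp _
        linarith
      · exact n0_le_exp f n0 hf40 hn0def
    have hfF : (f:ℝ) ≤ (FminFam S:ℝ) := by exact_mod_cast hFmin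
    have h1 : (1:ℝ) ≤ (FminFam S:ℝ) / Real.log n := by
      rw [le_div_iff₀ hlogpos, one_mul]
      linarith
    calc (ToptFam S:ℝ) ≤ 1 := by exact_mod_cast hTopt
      _ ≤ (FminFam S:ℝ) / Real.log n := h1
end
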